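/- arXiv:2003.07762 — 5 statements merged into one kernel-verified Lean document; each statement's English description precedes it below -/
import Mathlib

section
/- Let r₀ ∈ ℝ and let F : [r₀, ∞) × ℝ → ℝ be continuous and locally Lipschitz in the second variable. Assume that F(r, 1) > 0 and F(r, −1) < 0 for every r ≥ r₀. Then there exists a differentiable function k : [r₀, ∞) → ℝ solving k'(r) = −F(r, k(r)) with k(r₀) = −1, and any such solution satisfies −1 ≤ k(r) ≤ 1 for all r ≥ r₀ and −1 < k(r) < 1 for all r > r₀. -/
open Set Filter Topology

section ODEHelpers

lemma deriv_nonneg_of_max_right {k : ℝ → ℝ} {a b d : ℝ} (hab : a < b)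
    (hd : HasDerivWithinAt k d (Icc a b) b) (hmax : ∀ s ∈ Icc a b, k s ≤ k b) :
    0 ≤ d := by
  rw [hasDerivWithinAt_iff_tendsto_slope] at hd
  have hset : Icc a b \ {b} = Ico a b := Icc_sdiff_right
  rw [hset, nhdsWithin_Ico_eq_nhdsLT hab] at hd
  have : ∀ᶠ s in 𝓝[<] b, 0 ≤ slope k b s := by
    filter_upwards [eventually_mem_nhdsWithin, eventually_nhdsWithin_of_eventually_nhds
      (eventually_gt_nhds hab : ∀ᶠ s in 𝓝 b, a < s)] with s hs has
    have hs' : s < b := hs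
    have h1 : k s - k b ≤ 0 := sub_nonpos.2 (hmax s ⟨has.le, hs'.le⟩)
    have h2 : s - b < 0 := sub_neg.2 hs'
    rw [slope_def_field]
    exact div_nonneg_iff.2 (Or.inr ⟨h1, h2.le⟩)
  exact ge_of_tendsto hd this

lemma deriv_nonpos_of_max_left {k : ℝ → ℝ} {a b d : ℝ} (hab : a < b)
    (hd : HasDerivWithinAt k d (Icc a b) a) (hmax : ∀ s ∈ Icc a b, k s ≤ k a) :
    d ≤ 0 := by
  rw [hasDerivWithinAt_iff_tendsto_slope] at hd
  have hset : Icc a b \ {a} = Ioc a b := Icc_sdiff_left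
  rw [hset, nhdsWithin_Ioc_eq_nhdsGT hab] at hd
  have : ∀ᶠ s in 𝓝[>] a, slope k a s ≤ 0 := by
    filter_upwards [eventually_mem_nhdsWithin, eventually_nhdsWithin_of_eventually_nhds
      (eventually_lt_nhds hab : ∀ᶠ s in 𝓝 a, s < b)] with s hs hsb
    have hs' : a < s := hs
    have h1 : k s - k a ≤ 0 := sub_nonpos.2 (hmax s ⟨hs'.le, hsb.le⟩)
    rw [slope_def_field]
    exact div_nonpos_of_nonpos_of_nonneg h1 (sub_nonneg.2 hs'.le)
  exact le_of_tendsto hd this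


lemma trap_aux (r₀ : ℝ) (F : ℝ → ℝ → ℝ)
    (hFpos : ∀ r, r₀ ≤ r → 0 < F r 1) (hFneg : ∀ r, r₀ ≤ r → F r (-1) < 0)
    (k : ℝ → ℝ) (hk0 : k r₀ = -1)
    (hk : ∀ r, r₀ ≤ r → HasDerivWithinAt k (-F r (k r)) (Ici r₀) r) :
    (∀ r, r₀ ≤ r → -1 ≤ k r ∧ k r ≤ 1) ∧ (∀ r, r₀ < r → -1 < k r ∧ k r < 1) := by
  have hkc : ContinuousOn k (Ici r₀) := fun r hr => (hk r hr).continuousWithinAt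
  -- Step A : k r < 1 for all r ≥ r₀
  have hA : ∀ r, r₀ ≤ r → k r < 1 := by
    intro r1 hr1
    by_contra hcon
    push_neg at hcon
    set A : Set ℝ := Icc r₀ r1 ∩ k ⁻¹' (Ici 1) with hAdef
    have hclosed : IsClosed A :=
      (hkc.mono Icc_subset_Ici_self).preimage_isClosed_of_isClosed isClosed_Icc isClosed_Ici
    have hne : A.Nonempty := ⟨r1, ⟨⟨hr1, le_rfl⟩, hcon⟩⟩
    have hbdd : BddBelow A := ⟨r₀, fun s hs => hs.1.1⟩
    set c := sInf A with hc
    have hcA : c ∈ A := hclosed.csInf_mem hne hbdd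
    have hc0 : r₀ ≤ c := hcA.1.1
    have hck : (1 : ℝ) ≤ k c := hcA.2
    have hc0' : r₀ < c := by
      rcases eq_or_lt_of_le hc0 with h | h
      · exfalso; rw [← h, hk0] at hck; linarith
      · exact h
    have hlt : ∀ s ∈ Ico r₀ c, k s < 1 := by
      intro s hs
      by_contra hcon2
      push_neg at hcon2
      have : s ∈ A := ⟨⟨hs.1, hs.2.le.trans hcA.1.2⟩, hcon2⟩
      exact absurd (csInf_le hbdd this) (not_le.2 hs.2)
    have hkc1 : k c = 1 := by
      refine le_antisymm ?_ hck
      have htend : Filter.Tendsto k (nhdsWithin c (Ico r₀ c)) (nhds (k c)) :=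
        (hkc c hc0).mono (Ico_subset_Icc_self.trans Icc_subset_Ici_self)
      rw [nhdsWithin_Ico_eq_nhdsLT hc0'] at htend
      refine le_of_tendsto htend ?_
      filter_upwards [eventually_mem_nhdsWithin,
        eventually_nhdsWithin_of_eventually_nhds (eventually_gt_nhds hc0')] with s hs1 hs2
      exact (hlt s ⟨hs2.le, hs1⟩).le
    have hmax : ∀ s ∈ Icc r₀ c, k s ≤ k c := by
      intro s hs
      rcases eq_or_lt_of_le hs.2 with h | h
      · rw [h]
      · rw [hkc1]; exact (hlt s ⟨hs.1, h⟩).le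
    have hder : HasDerivWithinAt k (-F c (k c)) (Icc r₀ c) c :=
      (hk c hc0).mono Icc_subset_Ici_self
    have := deriv_nonneg_of_max_right hc0' hder hmax
    rw [hkc1] at this
    exact absurd (hFpos c hc0) (by linarith)
  -- Step B : -1 ≤ k r for all r ≥ r₀
  have hB : ∀ r, r₀ ≤ r → -1 ≤ k r := by
    intro r1 hr1
    by_contra hcon
    push_neg at hcon
    have hr1' : r₀ < r1 := by
      rcases eq_or_lt_of_le hr1 with h | h
      · exfalso; rw [← h, hk0] at hcon; linarith
      · exact h
    set A : Set ℝ := Icc r₀ r1 ∩ k ⁻¹' (Ici (-1)) with hAdef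
    have hclosed : IsClosed A :=
      (hkc.mono Icc_subset_Ici_self).preimage_isClosed_of_isClosed isClosed_Icc isClosed_Ici
    have hne : A.Nonempty := ⟨r₀, ⟨⟨le_rfl, hr1⟩, by simp [hk0]⟩⟩
    have hbdd : BddAbove A := ⟨r1, fun s hs => hs.1.2⟩
    set c := sSup A with hc
    have hcA : c ∈ A := hclosed.csSup_mem hne hbdd
    have hc0 : r₀ ≤ c := hcA.1.1
    have hck : (-1 : ℝ) ≤ k c := hcA.2
    have hc1 : c < r1 := by
      rcases eq_or_lt_of_le hcA.1.2 with h | h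
      · exfalso; rw [h] at hck; linarith
      · exact h
    have hlt : ∀ s ∈ Ioc c r1, k s < -1 := by
      intro s hs
      by_contra hcon2
      push_neg at hcon2
      have : s ∈ A := ⟨⟨hc0.trans hs.1.le, hs.2⟩, hcon2⟩
      exact absurd (le_csSup hbdd this) (not_le.2 hs.1)
    have hkc1 : k c = -1 := by
      refine le_antisymm ?_ hck
      have htend : Filter.Tendsto k (nhdsWithin c (Ioc c r1)) (nhds (k c)) :=
        (hkc c hc0).mono (fun s hs => hc0.trans hs.1.le)
      rw [nhdsWithin_Ioc_eq_nhdsGT hc1] at htend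
      refine le_of_tendsto htend ?_
      filter_upwards [eventually_mem_nhdsWithin,
        eventually_nhdsWithin_of_eventually_nhds (eventually_lt_nhds hc1)] with s hs1 hs2
      exact (hlt s ⟨hs1, hs2.le⟩).le
    have hmax : ∀ s ∈ Icc c r1, k s ≤ k c := by
      intro s hs
      rcases eq_or_lt_of_le hs.1 with h | h
      · rw [← h]
      · rw [hkc1]; exact (hlt s ⟨h, hs.2⟩).le
    have hder : HasDerivWithinAt k (-F c (k c)) (Icc c r1) c :=
      (hk c hc0).mono (fun s hs => hc0.trans hs.1)
    have := deriv_nonpos_of_max_left hc1 hder hmax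
    rw [hkc1] at this
    exact absurd (hFneg c hc0) (by linarith)
  -- Step C : -1 < k r for r > r₀
  have hC : ∀ r, r₀ < r → -1 < k r := by
    intro r hr
    rcases eq_or_lt_of_le (hB r hr.le) with h | h
    · exfalso
      have hmax : ∀ s ∈ Icc r₀ r, (fun x => -k x) s ≤ (fun x => -k x) r := by
        intro s hs
        simp only
        rw [← h]
        exact neg_le_neg (hB s hs.1)
      have hder : HasDerivWithinAt (fun x => -k x) (-(-F r (k r))) (Icc r₀ r) r :=
        ((hk r hr.le).mono Icc_subset_Ici_self).neg
      have := deriv_nonneg_of_max_right hr hder hmax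
      rw [← h] at this
      exact absurd (hFneg r hr.le) (by simp at this; linarith)
    · exact h
  exact ⟨fun r hr => ⟨hB r hr, (hA r hr).le⟩, fun r hr => ⟨hC r hr, hA r hr.le⟩⟩

lemma lipschitzOnWith_of_locally (K : NNReal) {δ : ℝ} (hδ : 0 < δ) (a b : ℝ) {f : ℝ → ℝ}
    (h : ∀ x y, x ∈ Icc a b → y ∈ Icc a b → x ≤ y → y - x < δ →
      dist (f y) (f x) ≤ K * (y - x)) :
    LipschitzOnWith K f (Icc a b) := by
  rw [lipschitzOnWith_iff_dist_le_mul]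
  have key : ∀ x ∈ Icc a b, ∀ y ∈ Icc a b, x ≤ y → dist (f x) (f y) ≤ K * dist x y := by
    intro x hx y hy hxy
    rcases eq_or_lt_of_le hxy with rfl | hlt
    · simp
    obtain ⟨n, hn⟩ := exists_nat_gt ((y - x) / δ)
    have hn0 : 0 < (n : ℝ) := lt_trans (div_pos (by linarith) hδ) hn
    have hd : (y - x) / n < δ := by
      rw [div_lt_iff₀ hn0]
      calc y - x = (y - x) / δ * δ := by field_simp
      _ < n * δ := by apply mul_lt_mul_of_pos_right hn hδ
      _ = δ * n := by ring
    have hdpos : 0 < (y - x) / n := div_pos (by linarith) hn0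
    set d := (y - x) / n with hdd
    set p : ℕ → ℝ := fun j => x + j * d with hp
    have hpmem : ∀ j : ℕ, j ≤ n → p j ∈ Icc a b := by
      intro j hj
      have h1 : x ≤ p j := by
        simp only [hp, le_add_iff_nonneg_right]
        positivity
      have h2 : p j ≤ y := by
        have : (j : ℝ) * d ≤ n * d := by
          apply mul_le_mul_of_nonneg_right (by exact_mod_cast hj) hdpos.le
        have hnd : (n : ℝ) * d = y - x := by rw [hdd]; field_simp
        simp only [hp]; linarith
      exact ⟨hx.1.trans h1, h2.trans hy.2⟩
    have hstep : ∀ i ∈ Finset.range n, dist (f (p i)) (f (p (i + 1))) ≤ K * d := by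
      intro i hi
      rw [Finset.mem_range] at hi
      have h1 : p i ∈ Icc a b := hpmem i hi.le
      have h2 : p (i + 1) ∈ Icc a b := hpmem (i + 1) hi
      have h3 : p i ≤ p (i + 1) := by
        simp only [hp]; push_cast; nlinarith
      have h4 : p (i + 1) - p i = d := by simp only [hp]; push_cast; ring
      have := h (p i) (p (i + 1)) h1 h2 h3 (by rw [h4]; exact hd)
      rw [h4] at this
      rwa [dist_comm]
    calc dist (f x) (f y) = dist (f (p 0)) (f (p n)) := by
          have hp0 : p 0 = x := by simp [hp]
          have hpn : p n = y := by
            simp only [hp, hdd]; field_simp; ring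
          rw [hp0, hpn]
      _ ≤ ∑ i ∈ Finset.range n, dist (f (p i)) (f (p (i + 1))) := dist_le_range_sum_dist (f ∘ p) n
      _ ≤ n * (K * d) := by
          have := Finset.sum_le_card_nsmul (Finset.range n) _ (K * d) hstep
          simpa [nsmul_eq_mul] using this
      _ = K * (y - x) := by
          rw [hdd]; field_simp
          try ring
      _ = K * dist x y := by
          rw [Real.dist_eq, abs_of_nonpos (show x - y ≤ 0 by linarith)]
          ring
  intro x hx y hy
  rcases le_total x y with hxy | hxy
  · exact key x hx y hy hxy
  · rw [dist_comm (f x), dist_comm x]; exact key y hy x hx hxy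

lemma exists_unif_lip (r₀ : ℝ) (F : ℝ → ℝ → ℝ)
    (hFlip : ∀ x : ℝ, ∃ s ∈ nhds x, ∃ K : NNReal,
      ∀ r, r₀ ≤ r → LipschitzOnWith K (F r) s) :
    ∃ K : NNReal, ∀ r, r₀ ≤ r → LipschitzOnWith K (F r) (Icc (-1) 1) := by
  choose s hs Kf hKf using hFlip
  obtain ⟨t, -, ht⟩ := isCompact_Icc.elim_nhds_subcover (fun x => interior (s x))
    (fun x _ => interior_mem_nhds.2 (hs x))
  have hcov : Icc (-1 : ℝ) 1 ⊆ ⋃ i : t, interior (s (i : ℝ)) := by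
    intro x hx
    obtain ⟨i, hi, hxi⟩ := Set.mem_iUnion₂.1 (ht hx)
    exact Set.mem_iUnion.2 ⟨⟨i, hi⟩, hxi⟩
  obtain ⟨δ, hδ, hleb⟩ := lebesgue_number_lemma_of_metric isCompact_Icc
    (fun i : t => isOpen_interior) hcov
  refine ⟨t.sup Kf, fun r hr => ?_⟩
  apply lipschitzOnWith_of_locally _ hδ
  intro x y hx hy hxy hclose
  obtain ⟨i, hi⟩ := hleb x hx
  have hxs : x ∈ s (i : ℝ) := interior_subset (hi (Metric.mem_ball_self hδ))
  have hys : y ∈ s (i : ℝ) := interior_subset (hi (by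
    rw [Metric.mem_ball, Real.dist_eq, abs_of_nonneg (by linarith)]; exact hclose))
  have hlip := (lipschitzOnWith_iff_dist_le_mul.1 (hKf (i : ℝ) r hr)) y hys x hxs
  have hK : (Kf (i : ℝ) : ℝ) ≤ ((t.sup Kf : NNReal) : ℝ) := by exact_mod_cast Finset.le_sup i.2
  calc dist (F r y) (F r x) ≤ Kf (i : ℝ) * dist y x := hlip
    _ ≤ ((t.sup Kf : NNReal) : ℝ) * dist y x := by
        apply mul_le_mul_of_nonneg_right hK dist_nonneg
    _ = ((t.sup Kf : NNReal) : ℝ) * (y - x) := by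
        rw [Real.dist_eq, abs_of_nonneg (by linarith)]

lemma exists_global (r₀ : ℝ) (v : ℝ → ℝ → ℝ) (K : NNReal)
    (hvcont : Continuous fun p : ℝ × ℝ => v p.1 p.2)
    (hvlip : ∀ r, LipschitzWith K (v r))
    (hvbdd : ∀ n : ℕ, ∃ C, ∀ t ∈ Icc r₀ (r₀ + (n : ℝ)), ∀ x : ℝ, ‖v t x‖ ≤ C) :
    ∃ k : ℝ → ℝ, k r₀ = -1 ∧ ∀ r, r₀ ≤ r → HasDerivWithinAt k (v r (k r)) (Ici r₀) r := by
  have hsol : ∀ n : ℕ, ∃ f : ℝ → ℝ, f r₀ = -1 ∧ ∀ t ∈ Icc r₀ (r₀ + (n : ℝ)),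
      HasDerivWithinAt f (v t (f t)) (Icc r₀ (r₀ + (n : ℝ))) t := by
    intro n
    obtain ⟨C, hC⟩ := hvbdd n
    have hn0 : (0 : ℝ) ≤ n := n.cast_nonneg
    have hC0 : 0 ≤ C := le_trans (norm_nonneg _) (hC r₀ ⟨le_rfl, by linarith⟩ 0)
    have hPL : IsPicardLindelof v (tmin := r₀) (tmax := r₀ + n) ⟨r₀, le_rfl, by linarith⟩
        (-1 : ℝ) ⟨C * n, by positivity⟩ 0 ⟨C, hC0⟩ K := by
      constructor
      · exact fun t _ => (hvlip t).lipschitzOnWith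
      · intro x _
        exact (hvcont.comp (continuous_id.prodMk continuous_const)).continuousOn
      · exact fun t ht x _ => hC t ht x
      · have : max (r₀ + n - r₀) (r₀ - r₀) = (n : ℝ) := by
          rw [max_eq_left (by linarith)]; ring
        simp only [this, NNReal.coe_zero, sub_zero, NNReal.coe_mk, le_refl]
        exact le_rfl
    exact IsPicardLindelof.exists_eq_forall_mem_Icc_hasDerivWithinAt₀ hPL
  choose sol hsol0 hsolD using hsol
  have hcont : ∀ n : ℕ, ContinuousOn (sol n) (Icc r₀ (r₀ + (n : ℝ))) :=
    fun n t ht => (hsolD n t ht).continuousWithinAt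
  have hderIci : ∀ n : ℕ, ∀ t ∈ Ico r₀ (r₀ + (n : ℝ)),
      HasDerivWithinAt (sol n) (v t (sol n t)) (Ici t) t := fun n t ht =>
    (hsolD n t (Ico_subset_Icc_self ht)).mono_of_mem_nhdsWithin (Icc_mem_nhdsGE_of_mem ht)
  have hagree : ∀ m n : ℕ, m ≤ n → EqOn (sol m) (sol n) (Icc r₀ (r₀ + (m : ℝ))) := by
    intro m n hmn
    have hmn' : (m : ℝ) ≤ n := by exact_mod_cast hmn
    exact ODE_solution_unique hvlip (hcont m) (hderIci m)
      ((hcont n).mono (Icc_subset_Icc_right (by linarith)))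
      (fun t ht => hderIci n t (Ico_subset_Ico_right (by linarith) ht))
      (by rw [hsol0, hsol0])
  set k : ℝ → ℝ := fun r => sol ⌈r - r₀⌉₊ r with hkdef
  have hkeq : ∀ n : ℕ, ∀ x ∈ Icc r₀ (r₀ + (n : ℝ)), k x = sol n x := by
    intro n x hx
    have hx' : x ∈ Icc r₀ (r₀ + (⌈x - r₀⌉₊ : ℝ)) :=
      ⟨hx.1, by have := Nat.le_ceil (x - r₀); linarith⟩
    show sol ⌈x - r₀⌉₊ x = sol n x
    rw [hagree _ (max ⌈x - r₀⌉₊ n) (le_max_left _ _) hx',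
      hagree n (max ⌈x - r₀⌉₊ n) (le_max_right _ _) hx]
  refine ⟨k, ?_, ?_⟩
  · show sol ⌈r₀ - r₀⌉₊ r₀ = -1
    simp only [sub_self, Nat.ceil_zero]
    exact hsol0 0
  · intro r hr
    set n : ℕ := ⌈r - r₀⌉₊ + 1 with hndef
    have hrn : r < r₀ + (n : ℝ) := by
      have := Nat.le_ceil (r - r₀)
      have : (⌈r - r₀⌉₊ : ℝ) < n := by rw [hndef]; push_cast; linarith [Nat.le_ceil (r - r₀)]
      have h2 := Nat.le_ceil (r - r₀)
      linarith
    have hmem : Icc r₀ (r₀ + (n : ℝ)) ∈ nhdsWithin r (Ici r₀) := by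
      rw [← Ici_inter_Iic]
      exact Filter.inter_mem self_mem_nhdsWithin
        (mem_nhdsWithin_of_mem_nhds (Iic_mem_nhds hrn))
    have hd : HasDerivWithinAt (sol n) (v r (sol n r)) (Ici r₀) r :=
      (hsolD n r ⟨hr, hrn.le⟩).mono_of_mem_nhdsWithin hmem
    have hkr : k r = sol n r := hkeq n r ⟨hr, hrn.le⟩
    have hfin : HasDerivWithinAt k (v r (sol n r)) (Ici r₀) r := by
      refine hd.congr_of_eventuallyEq ?_ hkr
      filter_upwards [hmem] with x hx using hkeq n x hx
    rwa [← hkr] at hfin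

end ODEHelpers


/-- Trapping argument underlying Lemma 3.4 of the paper: if `F : [r₀,∞) × ℝ → ℝ`
is continuous and locally Lipschitz in the second variable, with `F(r, 1) > 0`
and `F(r, -1) < 0` for all `r ≥ r₀`, then the initial value problem
`k' = -F(r, k)`, `k(r₀) = -1` has a global solution on `[r₀, ∞)`, and any such
solution satisfies `-1 ≤ k ≤ 1` on `[r₀, ∞)` and `-1 < k < 1` on `(r₀, ∞)`. -/
theorem ode_existence_and_trapping
    (r₀ : ℝ) (F : ℝ → ℝ → ℝ)
    (hFcont : ContinuousOn (fun p : ℝ × ℝ => F p.1 p.2) (Ici r₀ ×ˢ univ))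
    (hFlip : ∀ x : ℝ, ∃ s ∈ nhds x, ∃ K : NNReal,
      ∀ r, r₀ ≤ r → LipschitzOnWith K (F r) s)
    (hFpos : ∀ r, r₀ ≤ r → 0 < F r 1)
    (hFneg : ∀ r, r₀ ≤ r → F r (-1) < 0) :
    (∃ k : ℝ → ℝ, k r₀ = -1 ∧
      ∀ r, r₀ ≤ r → HasDerivWithinAt k (-F r (k r)) (Ici r₀) r) ∧
    (∀ k : ℝ → ℝ, k r₀ = -1 →
      (∀ r, r₀ ≤ r → HasDerivWithinAt k (-F r (k r)) (Ici r₀) r) →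
      (∀ r, r₀ ≤ r → -1 ≤ k r ∧ k r ≤ 1) ∧
      (∀ r, r₀ < r → -1 < k r ∧ k r < 1)) := by

  obtain ⟨K, hK⟩ := exists_unif_lip r₀ F hFlip
  set c : ℝ → ℝ := fun x => max (-1) (min 1 x) with hcdef
  have hcmem : ∀ x, c x ∈ Icc (-1 : ℝ) 1 :=
    fun x => ⟨le_max_left _ _, max_le (by norm_num) (min_le_left _ _)⟩
  have hcid : ∀ x ∈ Icc (-1 : ℝ) 1, c x = x := by
    intro x hx
    simp only [hcdef]
    rw [min_eq_right hx.2, max_eq_right hx.1]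
  set G : ℝ → ℝ → ℝ := fun t x => F (max t r₀) (c x) with hGdef
  have hGF : ∀ t, r₀ ≤ t → ∀ x ∈ Icc (-1 : ℝ) 1, G t x = F t x := by
    intro t ht x hx
    simp only [hGdef]
    rw [max_eq_left ht, hcid x hx]
  have hclip : LipschitzWith 1 c := (LipschitzWith.id.const_min 1).const_max (-1)
  have hGlip : ∀ t, LipschitzWith K (G t) := by
    intro t
    have h1 : LipschitzOnWith K (F (max t r₀)) (Icc (-1) 1) := hK _ (le_max_right _ _)
    have h2 : LipschitzOnWith (K * 1) (F (max t r₀) ∘ c) univ :=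
      h1.comp hclip.lipschitzOnWith (fun x _ => hcmem x)
    rw [mul_one] at h2
    exact lipschitzOnWith_univ.mp h2
  have hvlip : ∀ t, LipschitzWith K (fun x => -(G t x)) := by
    intro t
    have := LipschitzWith.id.neg.comp (hGlip t)
    rwa [one_mul] at this
  have hccont : Continuous c := continuous_const.max (continuous_const.min continuous_id)
  have hGcont : Continuous (fun p : ℝ × ℝ => G p.1 p.2) := by
    refine hFcont.comp_continuous
      ((continuous_fst.max continuous_const).prodMk (hccont.comp continuous_snd)) ?_
    exact fun p => mk_mem_prod (mem_Ici.2 (le_max_right _ _)) (mem_univ _)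
  have hvbdd : ∀ n : ℕ, ∃ C, ∀ t ∈ Icc r₀ (r₀ + (n : ℝ)), ∀ x : ℝ, ‖-(G t x)‖ ≤ C := by
    intro n
    obtain ⟨C, hC⟩ := (isCompact_Icc.prod
      (isCompact_Icc : IsCompact (Icc (-1 : ℝ) 1))).exists_bound_of_continuousOn
      hGcont.continuousOn
    refine ⟨C, fun t ht x => ?_⟩
    have h1 : G t x = G t (c x) := by
      simp only [hGdef]
      rw [hcid (c x) (hcmem x)]
    rw [norm_neg, h1]
    exact hC (t, c x) (mk_mem_prod ht (hcmem x))
  obtain ⟨k, hk0, hkd⟩ := exists_global r₀ (fun t x => -(G t x)) K hGcont.neg hvlip hvbdd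
  have hGpos : ∀ r, r₀ ≤ r → 0 < G r 1 := by
    intro r hr
    rw [hGF r hr 1 ⟨by norm_num, le_rfl⟩]
    exact hFpos r hr
  have hGneg : ∀ r, r₀ ≤ r → G r (-1) < 0 := by
    intro r hr
    rw [hGF r hr (-1) ⟨le_rfl, by norm_num⟩]
    exact hFneg r hr
  have htrap := trap_aux r₀ G hGpos hGneg k hk0 hkd
  have hkF : ∀ r, r₀ ≤ r → HasDerivWithinAt k (-F r (k r)) (Ici r₀) r := by
    intro r hr
    have h := hkd r hr
    have heq : G r (k r) = F r (k r) :=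
      hGF r hr (k r) ⟨(htrap.1 r hr).1, (htrap.1 r hr).2⟩
    rwa [heq] at h
  exact ⟨⟨k, hk0, hkF⟩, fun k' h0 hd => trap_aux r₀ F hFpos hFneg k' h0 hd⟩
end

section
/- Let ε ∈ (0,1), r₀ > 0, C₀ > 0, and let p : [r₀, ∞) → ℝ be a continuous function with |p(r)| ≤ C₀ r^{−4+ε/2} for all r ≥ r₀. If k₁ : [r₀, ∞) → ℝ is differentiable and satisfies k₁'(r) + 4 k₁(r)/r + 1/r³ = p(r) for all r ≥ r₀, then there exists a constant C > 0 such that |k₁(r) + 1/(2r²)| ≤ C r^{−3+ε/2} for all r ≥ r₀. -/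
/-- Step 2 in the proof of Lemma 3.5 of the paper: if `p` is continuous on
`[r₀,∞)` with `|p(r)| ≤ C₀ r^{-4+ε/2}` and `k₁` is differentiable with
`k₁'(r) + 4k₁(r)/r + 1/r³ = p(r)` for `r ≥ r₀`, then
`k₁(r) = -1/(2r²) + O(r^{-3+ε/2})`. -/
theorem linear_ode_asymptotics_step2
    (ε r₀ C₀ : ℝ) (hε : 0 < ε) (hε1 : ε < 1) (hr₀ : 0 < r₀) (hC₀ : 0 < C₀)
    (p : ℝ → ℝ) (hp_cont : ContinuousOn p (Set.Ici r₀))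
    (hp : ∀ r, r₀ ≤ r → |p r| ≤ C₀ * r ^ ((-4 : ℝ) + ε / 2))
    (k₁ : ℝ → ℝ)
    (hk : ∀ r, r₀ ≤ r →
      HasDerivWithinAt k₁ (p r - 4 * k₁ r / r - 1 / r ^ 3) (Set.Ici r₀) r) :
    ∃ C > 0, ∀ r, r₀ ≤ r →
      |k₁ r + 1 / (2 * r ^ 2)| ≤ C * r ^ ((-3 : ℝ) + ε / 2) := by
  set g : ℝ → ℝ := fun r => r ^ 4 * k₁ r + r ^ 2 / 2 with hgdef
  have hgderiv : ∀ r ∈ Set.Ici r₀, HasDerivWithinAt g (r ^ 4 * p r) (Set.Ici r₀) r := by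
    intro r hr
    have hrpos : (0 : ℝ) < r := lt_of_lt_of_le hr₀ hr
    have hrne : r ≠ 0 := ne_of_gt hrpos
    have h1 : HasDerivWithinAt (fun r : ℝ => r ^ 4) (4 * r ^ 3) (Set.Ici r₀) r := by
      simpa using (hasDerivAt_pow 4 r).hasDerivWithinAt
    have h2 := h1.mul (hk r hr)
    have h3 : HasDerivWithinAt (fun r : ℝ => r ^ 2 / 2) r (Set.Ici r₀) r := by
      have := ((hasDerivAt_pow 2 r).hasDerivWithinAt (s := Set.Ici r₀)).div_const 2
      simpa using this
    have h4 : HasDerivWithinAt g (4 * r ^ 3 * k₁ r + r ^ 4 * (p r - 4 * k₁ r / r - 1 / r ^ 3) + r) (Set.Ici r₀) r := h2.add h3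
    convert h4 using 1
    field_simp
    ring
  have key : ∀ r, r₀ ≤ r → |g r| ≤ (|g r₀| / r₀ ^ ((1:ℝ) + ε/2) + C₀) * r ^ ((1:ℝ) + ε/2) := by
    intro r hr
    have hrpos : (0 : ℝ) < r := lt_of_lt_of_le hr₀ hr
    have bdd : ∀ t ∈ Set.Icc r₀ r, ‖t ^ 4 * p t‖ ≤ C₀ * r ^ (ε / 2) := by
      intro t ht
      have htpos : (0 : ℝ) < t := lt_of_lt_of_le hr₀ ht.1
      have h1 : ‖t ^ 4 * p t‖ = t ^ 4 * |p t| := by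
        rw [Real.norm_eq_abs, abs_mul, abs_pow, abs_of_pos htpos]
      rw [h1]
      calc t ^ 4 * |p t| ≤ t ^ 4 * (C₀ * t ^ ((-4 : ℝ) + ε / 2)) := by
            exact mul_le_mul_of_nonneg_left (hp t ht.1) (by positivity)
        _ = C₀ * t ^ (ε / 2) := by
            rw [← Real.rpow_natCast t 4, mul_left_comm, ← Real.rpow_add htpos]
            norm_num
        _ ≤ C₀ * r ^ (ε / 2) := by
            apply mul_le_mul_of_nonneg_left _ (le_of_lt hC₀)
            exact Real.rpow_le_rpow (le_of_lt htpos) ht.2 (by positivity)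
    have mvt : ‖g r - g r₀‖ ≤ C₀ * r ^ (ε / 2) * ‖r - r₀‖ := by
      apply Convex.norm_image_sub_le_of_norm_hasDerivWithin_le
        (f' := fun t => t ^ 4 * p t)
        (fun t ht => (hgderiv t (Set.Icc_subset_Ici_self ht)).mono Set.Icc_subset_Ici_self)
        bdd (convex_Icc r₀ r) (Set.left_mem_Icc.2 hr) (Set.right_mem_Icc.2 hr)
    have h5 : ‖r - r₀‖ ≤ r := by
      rw [Real.norm_eq_abs, abs_of_nonneg (by linarith)]; linarith
    have h6 : |g r| ≤ |g r₀| + C₀ * r ^ (ε / 2) * r := by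
      have := abs_sub_abs_le_abs_sub (g r) (g r₀)
      have h7 : C₀ * r ^ (ε / 2) * ‖r - r₀‖ ≤ C₀ * r ^ (ε / 2) * r :=
        mul_le_mul_of_nonneg_left h5 (by positivity)
      rw [Real.norm_eq_abs] at mvt
      linarith
    have h8 : C₀ * r ^ (ε / 2) * r = C₀ * r ^ ((1:ℝ) + ε/2) := by
      rw [Real.rpow_add hrpos, Real.rpow_one]; ring
    have h9 : |g r₀| ≤ |g r₀| / r₀ ^ ((1:ℝ) + ε/2) * r ^ ((1:ℝ) + ε/2) := by
      rw [div_mul_eq_mul_div, le_div_iff₀ (by positivity)]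
      exact mul_le_mul_of_nonneg_left
        (Real.rpow_le_rpow (le_of_lt hr₀) hr (by positivity)) (abs_nonneg _)
    rw [add_mul]
    rw [h8] at h6
    linarith
  refine ⟨|g r₀| / r₀ ^ ((1:ℝ) + ε/2) + C₀, by positivity, fun r hr => ?_⟩
  have hrpos : (0 : ℝ) < r := lt_of_lt_of_le hr₀ hr
  have hrne : r ≠ 0 := ne_of_gt hrpos
  have heq : k₁ r + 1 / (2 * r ^ 2) = g r / r ^ 4 := by
    field_simp [hgdef]
    ring
  have hpow : r ^ ((-3 : ℝ) + ε / 2) = r ^ ((1:ℝ) + ε/2) / r ^ 4 := by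
    rw [eq_div_iff (by positivity), ← Real.rpow_natCast r 4, ← Real.rpow_add hrpos]
    norm_num
    rw [show (-3) + ε/2 + (4:ℝ) = 1 + ε/2 by ring]
  rw [heq, hpow, abs_div, abs_pow, abs_of_pos hrpos, ← mul_div_assoc]
  exact (div_le_div_iff_of_pos_right (by positivity)).2 (key r hr)
end

section
/- Let ε ∈ (0,1), α ∈ ℝ, r₀ > 1, C₀ > 0, and let k : [r₀, ∞) → (−1, 1) be a continuous function with |k(r) − r/√(1+r²) − α r⁻³| ≤ C₀ r^{−4+ε} for all r ≥ r₀. Define ψ(r) = k(r)/√((1 − k(r)²)(1 + r²)). Then there is a constant C > 0 such that |ψ(r) − 1 − α/r| ≤ C r^{−2+ε} for all r ≥ r₀; consequently, any antiderivative φ of ψ on [r₀, ∞) satisfies φ(r) = r + α ln r + c + O(r^{−1+ε}) as r → ∞, for some constant c ∈ ℝ. -/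
open Real Set
set_option maxHeartbeats 1000000

noncomputable def bpaF (t : ℝ) : ℝ := t / Real.sqrt (1 - t^2)
noncomputable def bpaF1 (t : ℝ) : ℝ := 1 / ((1 - t^2) * Real.sqrt (1 - t^2))
noncomputable def bpaF2 (t : ℝ) : ℝ := 3*t / ((1 - t^2)^2 * Real.sqrt (1 - t^2))

lemma bpa_sqrt_pos {t : ℝ} (h : t^2 < 1) : 0 < Real.sqrt (1 - t^2) :=
  Real.sqrt_pos.2 (by linarith)

lemma bpa_hasDerivAt_F {t : ℝ} (h : t^2 < 1) : HasDerivAt bpaF (bpaF1 t) t := by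
  have h0 : (0:ℝ) < 1 - t^2 := by linarith
  have hs := bpa_sqrt_pos h
  have hsq : Real.sqrt (1 - t^2) ^ 2 = 1 - t^2 := Real.sq_sqrt h0.le
  have hd : HasDerivAt (fun t : ℝ => Real.sqrt (1 - t^2)) (-t / Real.sqrt (1 - t^2)) t := by
    have h1 : HasDerivAt (fun t : ℝ => 1 - t^2) (-(2*t)) t := by
      simpa using ((hasDerivAt_pow 2 t).const_sub 1)
    have := (Real.hasDerivAt_sqrt (by positivity : (1:ℝ) - t^2 ≠ 0)).comp t h1
    refine this.congr_deriv ?_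
    field_simp
  have := (hasDerivAt_id t).div hd hs.ne'
  refine this.congr_deriv ?_
  unfold bpaF1
  simp only [id]
  field_simp
  nlinarith [hsq, hs]

lemma bpa_hasDerivAt_F1 {t : ℝ} (h : t^2 < 1) : HasDerivAt bpaF1 (bpaF2 t) t := by
  have h0 : (0:ℝ) < 1 - t^2 := by linarith
  have hs := bpa_sqrt_pos h
  have hsq : Real.sqrt (1 - t^2) ^ 2 = 1 - t^2 := Real.sq_sqrt h0.le
  have hd : HasDerivAt (fun t : ℝ => Real.sqrt (1 - t^2)) (-t / Real.sqrt (1 - t^2)) t := by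
    have h1 : HasDerivAt (fun t : ℝ => 1 - t^2) (-(2*t)) t := by
      simpa using ((hasDerivAt_pow 2 t).const_sub 1)
    have := (Real.hasDerivAt_sqrt (by positivity : (1:ℝ) - t^2 ≠ 0)).comp t h1
    refine this.congr_deriv ?_
    field_simp
  have h1 : HasDerivAt (fun t : ℝ => 1 - t^2) (-(2*t)) t := by
    simpa using ((hasDerivAt_pow 2 t).const_sub 1)
  have hprod : HasDerivAt (fun t : ℝ => (1 - t^2) * Real.sqrt (1 - t^2))
      ((-(2*t)) * Real.sqrt (1 - t^2) + (1 - t^2) * (-t / Real.sqrt (1 - t^2))) t := h1.mul hd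
  have hne : (1 - t^2) * Real.sqrt (1 - t^2) ≠ 0 := by positivity
  have := (hasDerivAt_const t (1:ℝ)).div hprod hne
  refine this.congr_deriv ?_
  unfold bpaF2
  field_simp
  linear_combination (-t) * hsq

lemma bpa_abs_sub_le {x y t : ℝ} (ht : t ∈ uIcc x y) : |t - y| ≤ |x - y| := by
  rcases le_total x y with h | h
  · rw [uIcc_of_le h] at ht
    rw [abs_sub_comm t y, abs_of_nonneg (by linarith [ht.1, ht.2] : 0 ≤ y - t),
      abs_sub_comm x y, abs_of_nonneg (by linarith : 0 ≤ y - x)]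
    linarith [ht.1]
  · rw [uIcc_of_ge h] at ht
    rw [abs_of_nonneg (by linarith [ht.1] : 0 ≤ t - y), abs_of_nonneg (by linarith : 0 ≤ x - y)]
    linarith [ht.2]

lemma bpa_taylor {x y B2 : ℝ}
    (hmem : ∀ t ∈ uIcc x y, t^2 < 1)
    (hbound : ∀ t ∈ uIcc x y, |bpaF2 t| ≤ B2) :
    |bpaF x - bpaF y - bpaF1 y * (x - y)| ≤ B2 * |x - y|^2 := by
  have hconv : Convex ℝ (uIcc x y) := convex_uIcc x y
  have hxs : x ∈ uIcc x y := left_mem_uIcc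
  have hys : y ∈ uIcc x y := right_mem_uIcc
  -- step 1 : bound |F1 t - F1 y|
  have h1 : ∀ t ∈ uIcc x y, |bpaF1 t - bpaF1 y| ≤ B2 * |x - y| := by
    intro t ht
    have := hconv.norm_image_sub_le_of_norm_hasDerivWithin_le
      (f := bpaF1) (f' := bpaF2)
      (fun s hs => (bpa_hasDerivAt_F1 (hmem s hs)).hasDerivWithinAt)
      (fun s hs => hbound s hs) hys ht
    calc |bpaF1 t - bpaF1 y| ≤ B2 * |t - y| := by simpa [Real.norm_eq_abs] using this
    _ ≤ B2 * |x - y| := by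
        have hB2 : 0 ≤ B2 := le_trans (abs_nonneg _) (hbound y hys)
        exact mul_le_mul_of_nonneg_left (bpa_abs_sub_le ht) hB2
  -- step 2 : MVT for G t = F t - F1 y * t
  have h2 := hconv.norm_image_sub_le_of_norm_hasDerivWithin_le
    (f := fun t => bpaF t - bpaF1 y * t) (f' := fun t => bpaF1 t - bpaF1 y)
    (fun s hs => by
      refine ((bpa_hasDerivAt_F (hmem s hs)).sub
        ((hasDerivAt_id s).const_mul (bpaF1 y))).hasDerivWithinAt.congr_deriv ?_
      simp)
    (fun s hs => by simpa [Real.norm_eq_abs] using h1 s hs) hys hxs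
  have : |bpaF x - bpaF1 y * x - (bpaF y - bpaF1 y * y)| ≤ B2 * |x - y| * |x - y| := by
    simpa [Real.norm_eq_abs] using h2
  calc |bpaF x - bpaF y - bpaF1 y * (x - y)|
      = |bpaF x - bpaF1 y * x - (bpaF y - bpaF1 y * y)| := by ring_nf
    _ ≤ B2 * |x - y| * |x - y| := this
    _ = B2 * |x - y|^2 := by ring

lemma bpa_rpow_neg_ofNat {r : ℝ} (hr : 0 < r) (n : ℕ) : r ^ (-(n:ℝ)) = 1 / r ^ n := by
  rw [Real.rpow_neg hr.le, Real.rpow_natCast, one_div]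

lemma bpa_tail_bound {ε α C₀ r x : ℝ} (hε : 0 < ε) (hε1 : ε < 1) (hC₀ : 0 < C₀)
    (hr1 : 1 ≤ r) (hr : 8 * (|α| + C₀) + 1 ≤ r)
    (hx1 : -1 < x) (hx2 : x < 1)
    (hxk : |x - r / Real.sqrt (1 + r ^ 2) - α / r ^ 3| ≤ C₀ * r ^ ((-4 : ℝ) + ε)) :
    |x / Real.sqrt ((1 - x ^ 2) * (1 + r ^ 2)) - 1 - α / r|
      ≤ (384 * (|α| + C₀) ^ 2 + |α| + 2 * C₀ + 1) * r ^ ((-2 : ℝ) + ε) := by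
  have hr0 : (0:ℝ) < r := by linarith
  have hq : (0:ℝ) < 1 + r ^ 2 := by positivity
  set S := Real.sqrt (1 + r ^ 2) with hS_def
  have hS : 0 < S := Real.sqrt_pos.2 hq
  have hSS : S ^ 2 = 1 + r ^ 2 := Real.sq_sqrt hq.le
  clear_value S
  have hrS : r ≤ S := by
    clear * - hSS hS hr0
    nlinarith [sq_nonneg (S - r), sq_nonneg (S + r)]
  have hS2r : S ≤ 2 * r := by
    clear * - hSS hS hr1
    nlinarith [sq_nonneg (S - 2*r), sq_nonneg (S + 2*r)]
  set y := r / S with hy_def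
  clear_value y
  have hy2sq : y ^ 2 = r ^ 2 / (1 + r ^ 2) := by rw [hy_def, div_pow, hSS]
  have hy2 : 1 - y ^ 2 = 1 / (1 + r ^ 2) := by rw [hy2sq]; field_simp; ring
  have hy_half : (1:ℝ)/2 ≤ y := by rw [hy_def, le_div_iff₀ hS]; linarith
  have h1my : 1 - y = (S - r) / S := by rw [hy_def]; field_simp
  have key : (1 - y) * (S * (S + r)) = 1 := by
    rw [h1my]; field_simp; linear_combination hSS
  have h1y0 : 0 ≤ 1 - y := by rw [h1my]; exact div_nonneg (by linarith) hS.le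
  have hy_gt : 1 / (2 * (1 + r ^ 2)) ≤ 1 - y := by
    have h1 : S * (S + r) ≤ 2 * (1 + r ^ 2) := by
      clear * - hSS hrS hS
      nlinarith [hSS, hrS, hS]
    rw [div_le_iff₀ (by positivity)]
    calc (1:ℝ) = (1 - y) * (S * (S + r)) := key.symm
      _ ≤ (1 - y) * (2 * (1 + r ^ 2)) := mul_le_mul_of_nonneg_left h1 h1y0
      _ = (1 - y) * (2 * (1 + r ^ 2)) := rfl
  set D := |α| + C₀ with hD_def
  clear_value D
  have hD : 0 < D := by rw [hD_def]; positivity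
  set Δ := D / r ^ 3 with hΔ_def
  clear_value Δ
  have hΔpos : 0 < Δ := by rw [hΔ_def]; positivity
  have hr4 : r ^ ((-4:ℝ) + ε) ≤ 1 / r ^ 3 := by
    calc r ^ ((-4:ℝ) + ε) ≤ r ^ (-(3:ℝ)) :=
          Real.rpow_le_rpow_of_exponent_le hr1 (by linarith)
      _ = 1 / r ^ 3 := by
          have := bpa_rpow_neg_ofNat hr0 3; norm_num at this ⊢
  have hxy : |x - y| ≤ Δ := by
    have h1 : |x - y| ≤ |x - y - α / r ^ 3| + |α / r ^ 3| := by
      calc |x - y| = |(x - y - α / r ^ 3) + α / r ^ 3| := by ring_nf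
        _ ≤ _ := abs_add_le _ _
    have h2 : |α / r ^ 3| = |α| / r ^ 3 := by
      rw [abs_div, abs_of_pos (by positivity : (0:ℝ) < r ^ 3)]
    have h3 : C₀ * r ^ ((-4:ℝ) + ε) ≤ C₀ / r ^ 3 := by
      rw [div_eq_mul_one_div]
      exact mul_le_mul_of_nonneg_left hr4 hC₀.le
    rw [hΔ_def, hD_def]
    calc |x - y| ≤ C₀ * r ^ ((-4:ℝ) + ε) + |α| / r ^ 3 := by
          rw [← h2]; exact le_trans h1 (by linarith [hxk])
      _ ≤ C₀ / r ^ 3 + |α| / r ^ 3 := by linarith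
      _ = (|α| + C₀) / r ^ 3 := by ring
  have hΔsmall : Δ ≤ 1 / (4 * (1 + r ^ 2)) := by
    rw [hΔ_def, div_le_div_iff₀ (by positivity) (by positivity)]
    have h8 : 8 * D ≤ r := by linarith [hr]
    have e1 : D * (4 * (1 + r ^ 2)) ≤ D * (8 * r ^ 2) :=
      mul_le_mul_of_nonneg_left (by clear * - hr1; nlinarith [hr1]) hD.le
    have e2 : (8 * D) * r ^ 2 ≤ r * r ^ 2 :=
      mul_le_mul_of_nonneg_right h8 (by positivity)
    clear * - e1 e2
    nlinarith [e1, e2]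
  have hdiv24 : 1 / (2 * (1 + r ^ 2)) = 2 * (1 / (4 * (1 + r ^ 2))) := by
    field_simp
    ring
  have h4pos : (0:ℝ) < 1 / (4 * (1 + r ^ 2)) := by positivity
  have hint : ∀ t ∈ uIcc x y, 0 ≤ t ∧ t ≤ 1 - 1 / (4 * (1 + r ^ 2)) := by
    intro t ht
    have h1 : |t - y| ≤ Δ := le_trans (bpa_abs_sub_le ht) hxy
    rw [abs_le] at h1
    have hΔ8 : Δ ≤ 1/8 := by
      calc Δ ≤ 1 / (4 * (1 + r ^ 2)) := hΔsmall
        _ ≤ 1/8 := by rw [div_le_div_iff₀ (by positivity) (by norm_num)]; clear * - hr1; nlinarith [hr1]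
    constructor
    · linarith [h1.1, hy_half]
    · linarith [h1.2, hy_gt, hΔsmall, hdiv24, h4pos]
  have hmem : ∀ t ∈ uIcc x y, t ^ 2 < 1 := by
    intro t ht
    obtain ⟨h0, h1⟩ := hint t ht
    clear * - h0 h1 h4pos
    nlinarith [h4pos]
  have h1t2 : ∀ t ∈ uIcc x y, 1 / (4 * (1 + r ^ 2)) ≤ 1 - t ^ 2 := by
    intro t ht
    obtain ⟨h0, h1⟩ := hint t ht
    clear * - h0 h1 h4pos
    nlinarith [mul_nonneg h0 (show (0:ℝ) ≤ 1 - t by nlinarith [h4pos])]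
  -- bound on F2
  set B2 := 96 * (1 + r ^ 2) ^ 2 * S with hB2_def
  clear_value B2
  have hB2bound : ∀ t ∈ uIcc x y, |bpaF2 t| ≤ B2 := by
    intro t ht
    have ht2 := hmem t ht
    have h12 := h1t2 t ht
    set a := Real.sqrt (1 - t ^ 2) with ha_def
    have ha : 0 < a := Real.sqrt_pos.2 (by linarith)
    have haa : a ^ 2 = 1 - t ^ 2 := Real.sq_sqrt (by linarith)
    have ha_eq : Real.sqrt (1 - t ^ 2) = a := rfl
    clear_value a
    have hsq14 : (1 / (2 * S)) ^ 2 = 1 / (4 * (1 + r ^ 2)) := by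
      rw [div_pow, one_pow, mul_pow, hSS]
      norm_num
    have ha_ge : 1 / (2 * S) ≤ a := by
      have h := Real.sqrt_le_sqrt h12
      calc 1 / (2 * S) = Real.sqrt (1 / (4 * (1 + r ^ 2))) := by
            rw [← hsq14, Real.sqrt_sq (by positivity)]
        _ ≤ a := by rw [← ha_eq]; exact h
    have ht1 : |t| ≤ 1 := by
      obtain ⟨h0, h1⟩ := hint t ht
      clear * - h0 h1 h4pos
      rw [abs_of_nonneg h0]; nlinarith [h4pos]
    have hS4 : S ^ 4 = (1 + r ^ 2) ^ 2 := by
      linear_combination (S ^ 2 + (1 + r ^ 2)) * hSS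
    have heq : B2 * (1 / (2 * S)) ^ 5 = 3 := by
      rw [hB2_def, div_pow, one_pow,
        show (2*S)^5 = 32 * S * (1 + r ^ 2) ^ 2 by
          linear_combination (32 * S * (S ^ 2 + (1 + r ^ 2))) * hSS]
      field_simp
      ring
    have key2 : 3 ≤ B2 * ((1 - t ^ 2) ^ 2 * a) := by
      have hS' : (0:ℝ) ≤ 1 / (2 * S) := div_nonneg zero_le_one (by linarith)
      have hB2nn : (0:ℝ) ≤ B2 := by
        rw [hB2_def]; clear * - hS hq; nlinarith [hS, hq, sq_nonneg (1 + r^2)]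
      have h5 : (1 / (2 * S)) ^ 5 ≤ a ^ 5 := pow_le_pow_left₀ hS' ha_ge 5
      calc (3:ℝ) = B2 * (1 / (2 * S)) ^ 5 := heq.symm
        _ ≤ B2 * a ^ 5 := mul_le_mul_of_nonneg_left h5 hB2nn
        _ = B2 * ((1 - t ^ 2) ^ 2 * a) := by rw [← haa]; ring
    simp only [bpaF2]
    have hden : (0:ℝ) < (1 - t^2)^2 * a :=
      mul_pos (pow_pos (by linarith : (0:ℝ) < 1 - t ^ 2) 2) ha
    rw [ha_eq, abs_div, abs_of_pos hden, div_le_iff₀ hden]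
    calc |3 * t| = 3 * |t| := by rw [abs_mul]; norm_num
      _ ≤ 3 := by linarith
      _ ≤ B2 * ((1 - t ^ 2) ^ 2 * a) := key2
  -- Taylor estimate
  have hB2nn : (0:ℝ) ≤ B2 := by
    rw [hB2_def]; clear * - hS hq; nlinarith [hS, hq, sq_nonneg (1 + r^2)]
  have htaylor := bpa_taylor hmem hB2bound
  -- exact values
  have hsqinv : Real.sqrt (1 / (1 + r ^ 2)) = 1 / S := by
    rw [one_div, Real.sqrt_inv, ← hS_def, one_div]
  have hFy : bpaF y = r := by
    simp only [bpaF]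
    rw [hy2, hsqinv, hy_def]
    field_simp
  have hF1y : bpaF1 y = (1 + r ^ 2) * S := by
    simp only [bpaF1]
    rw [hy2, hsqinv]
    field_simp
  have hFx : x / Real.sqrt ((1 - x ^ 2) * (1 + r ^ 2)) = bpaF x / S := by
    have hx2' : x ^ 2 < 1 := hmem x left_mem_uIcc
    simp only [bpaF]
    rw [Real.sqrt_mul (by clear * - hx2'; nlinarith : (0:ℝ) ≤ 1 - x ^ 2), ← hS_def, div_div]
  -- decomposition
  have hdecomp : x / Real.sqrt ((1 - x ^ 2) * (1 + r ^ 2)) - 1 - α / r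
      = (bpaF x - bpaF y - bpaF1 y * (x - y)) / S
        + ((1 + r ^ 2) * (x - y) - α / r) + (r / S - 1) := by
    rw [hFx, hFy, hF1y]
    field_simp
    ring
  rw [hdecomp]
  -- term bounds
  have hT1 : |(bpaF x - bpaF y - bpaF1 y * (x - y)) / S| ≤ 384 * D ^ 2 / r ^ 2 := by
    rw [abs_div, abs_of_pos hS, div_le_iff₀ hS]
    calc |bpaF x - bpaF y - bpaF1 y * (x - y)| ≤ B2 * |x - y| ^ 2 := htaylor
      _ ≤ B2 * Δ ^ 2 := by
          apply mul_le_mul_of_nonneg_left _ hB2nn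
          exact pow_le_pow_left₀ (abs_nonneg _) hxy 2
      _ = 96 * (1 + r ^ 2) ^ 2 * (D ^ 2 / r ^ 6) * S := by
          rw [hB2_def, hΔ_def, div_pow]; ring
      _ ≤ 384 * D ^ 2 / r ^ 2 * S := by
          apply mul_le_mul_of_nonneg_right _ hS.le
          calc 96 * (1 + r ^ 2) ^ 2 * (D ^ 2 / r ^ 6)
              ≤ 96 * (4 * r ^ 4) * (D ^ 2 / r ^ 6) := by
                apply mul_le_mul_of_nonneg_right _ (by positivity)
                clear * - hr1
                nlinarith [hr1, sq_nonneg (r^2 - 1), mul_le_mul_of_nonneg_left hr1 (show (0:ℝ) ≤ r by linarith)]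
            _ = 384 * D ^ 2 / r ^ 2 := by field_simp; ring
  have hT2 : |(1 + r ^ 2) * (x - y) - α / r|
      ≤ |α| / r ^ 3 + 2 * C₀ * r ^ ((-2:ℝ) + ε) := by
    have hid : (1 + r ^ 2) * (x - y) - α / r
        = (1 + r ^ 2) * (x - y - α / r ^ 3) + α / r ^ 3 := by
      field_simp; ring
    rw [hid]
    have hrw : 2 * C₀ * (r ^ ((2:ℝ)) * r ^ ((-4:ℝ) + ε)) = 2 * C₀ * r ^ ((-2:ℝ) + ε) := by
      rw [← Real.rpow_add hr0, show (2:ℝ) + (-4 + ε) = -2 + ε by ring]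
    calc |(1 + r ^ 2) * (x - y - α / r ^ 3) + α / r ^ 3|
        ≤ |(1 + r ^ 2) * (x - y - α / r ^ 3)| + |α / r ^ 3| := abs_add_le _ _
      _ = (1 + r ^ 2) * |x - y - α / r ^ 3| + |α| / r ^ 3 := by
          rw [abs_mul, abs_of_pos hq, abs_div, abs_of_pos (by positivity : (0:ℝ) < r ^ 3)]
      _ ≤ (1 + r ^ 2) * (C₀ * r ^ ((-4:ℝ) + ε)) + |α| / r ^ 3 := by
          have := mul_le_mul_of_nonneg_left hxk hq.le; linarith
      _ ≤ 2 * C₀ * r ^ ((-2:ℝ) + ε) + |α| / r ^ 3 := by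
          have h1 : (1 + r ^ 2) * (C₀ * r ^ ((-4:ℝ) + ε))
              ≤ 2 * r ^ 2 * (C₀ * r ^ ((-4:ℝ) + ε)) := by
            apply mul_le_mul_of_nonneg_right (by clear * - hr1; nlinarith [hr1, mul_le_mul_of_nonneg_left hr1 (show (0:ℝ) ≤ r by linarith)]) (by positivity)
          have h2 : 2 * r ^ 2 * (C₀ * r ^ ((-4:ℝ) + ε)) = 2 * C₀ * r ^ ((-2:ℝ) + ε) := by
            rw [← hrw, show r ^ ((2:ℝ)) = r ^ 2 from Real.rpow_two r]
            ring
          calc (1 + r ^ 2) * (C₀ * r ^ ((-4:ℝ) + ε)) + |α| / r ^ 3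
              ≤ 2 * r ^ 2 * (C₀ * r ^ ((-4:ℝ) + ε)) + |α| / r ^ 3 := by linarith [h1]
            _ = 2 * C₀ * r ^ ((-2:ℝ) + ε) + |α| / r ^ 3 := by rw [h2]
      _ = |α| / r ^ 3 + 2 * C₀ * r ^ ((-2:ℝ) + ε) := by ring
  have hT3 : |r / S - 1| ≤ 1 / r ^ 2 := by
    have hrS1 : r / S ≤ 1 := by rw [div_le_one hS]; exact hrS
    rw [abs_of_nonpos (by linarith), neg_sub]
    have h1 : 1 - r / S = (S - r) / S := by field_simp
    have key' : (S - r) * (S + r) = 1 := by linear_combination hSS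
    rw [h1, div_le_div_iff₀ hS (by positivity)]
    have h2r : (S - r) * (2 * r) ≤ 1 := by
      clear * - key' hrS hr0
      nlinarith [key', hrS, hr0, sq_nonneg (S - r)]
    clear * - h2r hrS hS hr0 hr1
    nlinarith [mul_le_mul_of_nonneg_right h2r (show (0:ℝ) ≤ r / 2 by linarith),
      hrS, hS, hr0, hr1]
  -- assemble
  have h2e : 1 / r ^ 2 ≤ r ^ ((-2:ℝ) + ε) := by
    calc 1 / r ^ 2 = r ^ (-((2:ℕ):ℝ)) := (bpa_rpow_neg_ofNat hr0 2).symm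
      _ ≤ r ^ ((-2:ℝ) + ε) := Real.rpow_le_rpow_of_exponent_le hr1 (by push_cast; linarith)
  have h3e : 1 / r ^ 3 ≤ r ^ ((-2:ℝ) + ε) := by
    calc 1 / r ^ 3 = r ^ (-((3:ℕ):ℝ)) := (bpa_rpow_neg_ofNat hr0 3).symm
      _ ≤ r ^ ((-2:ℝ) + ε) := Real.rpow_le_rpow_of_exponent_le hr1 (by push_cast; linarith)
  have habs : ∀ A B C : ℝ, |A + B + C| ≤ |A| + |B| + |C| := fun A B C =>
    le_trans (abs_add_le _ _) (by linarith [abs_add_le A B])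
  calc |(bpaF x - bpaF y - bpaF1 y * (x - y)) / S
        + ((1 + r ^ 2) * (x - y) - α / r) + (r / S - 1)|
      ≤ |(bpaF x - bpaF y - bpaF1 y * (x - y)) / S|
        + |(1 + r ^ 2) * (x - y) - α / r| + |r / S - 1| := habs _ _ _
    _ ≤ 384 * D ^ 2 / r ^ 2 + (|α| / r ^ 3 + 2 * C₀ * r ^ ((-2:ℝ) + ε)) + 1 / r ^ 2 := by
        clear * - hT1 hT2 hT3
        linarith [hT1, hT2, hT3]
    _ ≤ (384 * D ^ 2 + |α| + 2 * C₀ + 1) * r ^ ((-2:ℝ) + ε) := by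
        have e1 : 384 * D ^ 2 / r ^ 2 ≤ 384 * D ^ 2 * r ^ ((-2:ℝ) + ε) := by
          rw [div_eq_mul_one_div]
          exact mul_le_mul_of_nonneg_left h2e (by positivity)
        have e2 : |α| / r ^ 3 ≤ |α| * r ^ ((-2:ℝ) + ε) := by
          rw [div_eq_mul_one_div]
          exact mul_le_mul_of_nonneg_left h3e (abs_nonneg _)
        have e3 : 1 / r ^ 2 ≤ 1 * r ^ ((-2:ℝ) + ε) := by rw [one_mul]; exact h2e
        clear * - e1 e2 e3
        linarith [e1, e2, e3]



/-- Asymptotic integration step in the proof of Proposition 3.7 of the paper: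
if `k : [r₀,∞) → (-1,1)` satisfies `k(r) = r/√(1+r²) + α/r³ + O(r^{-4+ε})`,
then `ψ(r) = k(r)/√((1-k(r)²)(1+r²))` satisfies `ψ(r) = 1 + α/r + O(r^{-2+ε})`,
and consequently any antiderivative `φ` of `ψ` on `[r₀,∞)` satisfies
`φ(r) = r + α ln r + c + O(r^{-1+ε})` for some constant `c`. -/
theorem barrier_profile_asymptotics
    (ε α r₀ C₀ : ℝ) (hε : 0 < ε) (hε1 : ε < 1) (hr₀ : 1 < r₀) (hC₀ : 0 < C₀)
    (k : ℝ → ℝ) (hk_cont : ContinuousOn k (Set.Ici r₀))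
    (hk_mem : ∀ r, r₀ ≤ r → k r ∈ Set.Ioo (-1 : ℝ) 1)
    (hk : ∀ r, r₀ ≤ r →
      |k r - r / Real.sqrt (1 + r ^ 2) - α / r ^ 3| ≤ C₀ * r ^ ((-4 : ℝ) + ε)) :
    (∃ C > 0, ∀ r, r₀ ≤ r →
        |k r / Real.sqrt ((1 - k r ^ 2) * (1 + r ^ 2)) - 1 - α / r|
          ≤ C * r ^ ((-2 : ℝ) + ε)) ∧
    (∀ φ : ℝ → ℝ,
        (∀ r, r₀ ≤ r → HasDerivWithinAt φ
          (k r / Real.sqrt ((1 - k r ^ 2) * (1 + r ^ 2))) (Set.Ici r₀) r) →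
        ∃ c : ℝ, ∃ C' > 0, ∀ r, r₀ ≤ r →
          |φ r - r - α * Real.log r - c| ≤ C' * r ^ ((-1 : ℝ) + ε)) := by
  -- Part 1
  have part1 : ∃ C > 0, ∀ r, r₀ ≤ r →
      |k r / Real.sqrt ((1 - k r ^ 2) * (1 + r ^ 2)) - 1 - α / r|
        ≤ C * r ^ ((-2 : ℝ) + ε) := by
    set R := max r₀ (8 * (|α| + C₀) + 1) with hR_def
    have hr₀R : r₀ ≤ R := le_max_left _ _
    have hRtail : 8 * (|α| + C₀) + 1 ≤ R := le_max_right _ _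
    have hR1 : 1 < R := lt_of_lt_of_le hr₀ hr₀R
    have hR0 : 0 < R := by linarith
    -- continuity of the error function on the compact part
    have hsub : Set.Icc r₀ R ⊆ Set.Ici r₀ := Set.Icc_subset_Ici_self
    have hkpos : ∀ r ∈ Set.Ici r₀, (0:ℝ) < (1 - k r ^ 2) * (1 + r ^ 2) := by
      intro r hr
      obtain ⟨h1, h2⟩ := hk_mem r hr
      have : k r ^ 2 < 1 := by nlinarith
      have hrpos : (0:ℝ) < r := by
        have := (Set.mem_Ici.1 hr); linarith
      nlinarith
    have hcont : ContinuousOn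
        (fun r => k r / Real.sqrt ((1 - k r ^ 2) * (1 + r ^ 2)) - 1 - α / r)
        (Set.Icc r₀ R) := by
      have h1 : ContinuousOn k (Set.Icc r₀ R) := hk_cont.mono hsub
      have h2 : ContinuousOn (fun r => Real.sqrt ((1 - k r ^ 2) * (1 + r ^ 2)))
          (Set.Icc r₀ R) := by
        apply Real.continuous_sqrt.comp_continuousOn
        exact (continuousOn_const.sub (h1.pow 2)).mul
          (continuousOn_const.add ((continuousOn_id.pow 2)))
      apply ContinuousOn.sub
      apply ContinuousOn.sub
      · exact h1.div h2 (fun r hr =>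
          ne_of_gt (Real.sqrt_pos.2 (hkpos r (hsub hr))))
      · exact continuousOn_const
      · exact continuousOn_const.div continuousOn_id
          (fun r hr => ne_of_gt (lt_of_lt_of_le (by linarith) hr.1))
    obtain ⟨M, hM⟩ := (isCompact_Icc).exists_bound_of_continuousOn hcont
    have hM0 : 0 ≤ M := le_trans (norm_nonneg _) (hM r₀ ⟨le_refl _, hr₀R⟩)
    set Ct := 384 * (|α| + C₀) ^ 2 + |α| + 2 * C₀ + 1 with hCt_def
    have hCt : 0 < Ct := by rw [hCt_def]; positivity
    refine ⟨Ct + M * R ^ ((2:ℝ) - ε), by positivity, ?_⟩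
    intro r hr
    have hr1 : (1:ℝ) ≤ r := le_trans hr₀.le hr
    have hr0 : (0:ℝ) < r := by linarith
    have hrpow : (0:ℝ) < r ^ ((-2:ℝ) + ε) := Real.rpow_pos_of_pos hr0 _
    rcases le_or_gt R r with hcase | hcase
    · -- tail regime
      have := bpa_tail_bound hε hε1 hC₀ hr1 (le_trans hRtail hcase)
        (hk_mem r hr).1 (hk_mem r hr).2 (hk r hr)
      calc |k r / Real.sqrt ((1 - k r ^ 2) * (1 + r ^ 2)) - 1 - α / r|
          ≤ Ct * r ^ ((-2:ℝ) + ε) := by rw [hCt_def]; exact this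
        _ ≤ (Ct + M * R ^ ((2:ℝ) - ε)) * r ^ ((-2:ℝ) + ε) := by
            apply mul_le_mul_of_nonneg_right _ hrpow.le
            have : (0:ℝ) ≤ M * R ^ ((2:ℝ) - ε) := by positivity
            linarith
    · -- compact regime
      have hmem' : r ∈ Set.Icc r₀ R := ⟨hr, hcase.le⟩
      have h1 : |k r / Real.sqrt ((1 - k r ^ 2) * (1 + r ^ 2)) - 1 - α / r| ≤ M := by
        have := hM r hmem'
        rwa [Real.norm_eq_abs] at this
      have hx : R ^ ((-2:ℝ) + ε) ≤ r ^ ((-2:ℝ) + ε) := by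
        rw [show ((-2:ℝ) + ε) = -((2:ℝ) - ε) by ring, Real.rpow_neg hr0.le,
          Real.rpow_neg hR0.le]
        apply inv_anti₀ (Real.rpow_pos_of_pos hr0 _)
        exact Real.rpow_le_rpow hr0.le hcase.le (by linarith)
      have hRR : R ^ ((2:ℝ) - ε) * R ^ ((-2:ℝ) + ε) = 1 := by
        rw [← Real.rpow_add hR0]
        norm_num
      calc |k r / Real.sqrt ((1 - k r ^ 2) * (1 + r ^ 2)) - 1 - α / r|
          ≤ M := h1
        _ = M * (R ^ ((2:ℝ) - ε) * R ^ ((-2:ℝ) + ε)) := by rw [hRR, mul_one]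
        _ ≤ M * (R ^ ((2:ℝ) - ε) * r ^ ((-2:ℝ) + ε)) := by
            apply mul_le_mul_of_nonneg_left _ hM0
            exact mul_le_mul_of_nonneg_left hx (by positivity)
        _ = M * R ^ ((2:ℝ) - ε) * r ^ ((-2:ℝ) + ε) := by ring
        _ ≤ (Ct + M * R ^ ((2:ℝ) - ε)) * r ^ ((-2:ℝ) + ε) := by
            apply mul_le_mul_of_nonneg_right _ hrpow.le
            linarith
  obtain ⟨C, hC, hbound⟩ := part1
  refine ⟨⟨C, hC, hbound⟩, ?_⟩
  -- Part 2
  intro φ hφ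
  set ψ := fun r => k r / Real.sqrt ((1 - k r ^ 2) * (1 + r ^ 2)) with hψ_def
  have h1ε : (0:ℝ) < 1 - ε := by linarith
  set C' := C / (1 - ε) with hC'_def
  have hC' : 0 < C' := by rw [hC'_def]; positivity
  set g := fun r : ℝ => φ r - r - α * Real.log r with hg_def
  set Mf := fun r : ℝ => C' * r ^ ((-1:ℝ) + ε) with hMf_def
  set u := fun r : ℝ => g r + Mf r with hu_def
  set v := fun r : ℝ => g r - Mf r with hv_def
  have hMf_nonneg : ∀ r, r₀ ≤ r → 0 ≤ Mf r := by
    intro r hr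
    have hr0 : (0:ℝ) < r := by linarith
    rw [hMf_def]
    positivity
  -- derivatives
  have hg_deriv : ∀ r ∈ Set.Ici r₀, HasDerivWithinAt g
      (ψ r - 1 - α * r⁻¹) (Set.Ici r₀) r := by
    intro r hr
    have hr0 : (0:ℝ) < r := by have := Set.mem_Ici.1 hr; linarith
    exact ((hφ r hr).sub (hasDerivAt_id r).hasDerivWithinAt).sub
      (((Real.hasDerivAt_log hr0.ne').const_mul α).hasDerivWithinAt)
  have hMf_deriv : ∀ r ∈ Set.Ici r₀, HasDerivWithinAt Mf
      (-(C * r ^ ((-2:ℝ) + ε))) (Set.Ici r₀) r := by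
    intro r hr
    have hr0 : (0:ℝ) < r := by have := Set.mem_Ici.1 hr; linarith
    have h := (Real.hasDerivAt_rpow_const (x := r) (p := (-1:ℝ) + ε)
      (Or.inl hr0.ne')).const_mul C'
    have heq : C' * (((-1:ℝ) + ε) * r ^ ((-1:ℝ) + ε - 1)) = -(C * r ^ ((-2:ℝ) + ε)) := by
      rw [show ((-1:ℝ) + ε - 1) = (-2:ℝ) + ε by ring, hC'_def]
      field_simp
      ring
    rw [hMf_def]
    exact (heq ▸ h).hasDerivWithinAt
  have hu_deriv : ∀ r ∈ Set.Ici r₀, HasDerivWithinAt u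
      ((ψ r - 1 - α * r⁻¹) + -(C * r ^ ((-2:ℝ) + ε))) (Set.Ici r₀) r :=
    fun r hr => (hg_deriv r hr).add (hMf_deriv r hr)
  have hv_deriv : ∀ r ∈ Set.Ici r₀, HasDerivWithinAt v
      ((ψ r - 1 - α * r⁻¹) - -(C * r ^ ((-2:ℝ) + ε))) (Set.Ici r₀) r :=
    fun r hr => (hg_deriv r hr).sub (hMf_deriv r hr)
  have hbound' : ∀ r, r₀ ≤ r →
      |ψ r - 1 - α * r⁻¹| ≤ C * r ^ ((-2:ℝ) + ε) := by
    intro r hr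
    have := hbound r hr
    rwa [div_eq_mul_inv] at this
  -- monotonicity
  have hu_anti : AntitoneOn u (Set.Ici r₀) := by
    apply antitoneOn_of_hasDerivWithinAt_nonpos (convex_Ici r₀)
      (fun r hr => (hu_deriv r hr).continuousWithinAt)
      (fun r hr => (hu_deriv r (interior_subset hr)).mono interior_subset)
    intro r hr
    rw [interior_Ici] at hr
    have h := (abs_le.1 (hbound' r (le_of_lt hr))).2
    linarith
  have hv_mono : MonotoneOn v (Set.Ici r₀) := by
    apply monotoneOn_of_hasDerivWithinAt_nonneg (convex_Ici r₀)
      (fun r hr => (hv_deriv r hr).continuousWithinAt)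
      (fun r hr => (hv_deriv r (interior_subset hr)).mono interior_subset)
    intro r hr
    rw [interior_Ici] at hr
    have h := (abs_le.1 (hbound' r (le_of_lt hr))).1
    linarith
  have hvu : ∀ r, r₀ ≤ r → v r ≤ u r := by
    intro r hr
    have := hMf_nonneg r hr
    simp only [hu_def, hv_def]
    linarith
  -- supremum
  have hne : (v '' Set.Ici r₀).Nonempty := ⟨v r₀, Set.mem_image_of_mem v (Set.self_mem_Ici)⟩
  have hbdd : BddAbove (v '' Set.Ici r₀) := by
    refine ⟨u r₀, ?_⟩
    rintro z ⟨s, hs, rfl⟩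
    calc v s ≤ u s := hvu s hs
      _ ≤ u r₀ := hu_anti Set.self_mem_Ici hs hs
  set c := sSup (v '' Set.Ici r₀) with hc_def
  refine ⟨c, C', hC', ?_⟩
  intro r hr
  have hvc : v r ≤ c := le_csSup hbdd (Set.mem_image_of_mem v hr)
  have hcu : c ≤ u r := by
    apply csSup_le hne
    rintro z ⟨s, hs, rfl⟩
    rcases le_total s r with h | h
    · calc v s ≤ v r := hv_mono hs hr h
        _ ≤ u r := hvu r hr
    · calc v s ≤ u s := hvu s hs
        _ ≤ u r := hu_anti hr hs h
  have : |g r - c| ≤ Mf r := by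
    rw [abs_le]
    constructor
    · simp only [hu_def] at hcu; linarith
    · simp only [hv_def] at hvc; linarith
  simpa [hg_def, hMf_def] using this
end

section
/- For every C > 0 there exist ρ' > 0 and B > 0, depending only on C, with the following property: every continuous function S : [0, ρ'] → [0, ∞) with S(0) = 0 satisfying S(t) ≤ C (1 + S(t))^{5/2} t for all t ∈ [0, ρ'] obeys S(t) ≤ B for all t ∈ [0, ρ']. -/
/-- Real-analysis core of Lemma 5.3 of the paper: for every `C > 0` there exist
`ρ' > 0` and `B > 0`, depending only on `C`, such that every continuous
nonnegative function `S` on `[0, ρ']` with `S(0) = 0` satisfying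
`S(t) ≤ C (1 + S(t))^{5/2} t` for all `t ∈ [0, ρ']` obeys `S(t) ≤ B` on
`[0, ρ']`. -/
theorem self_improving_gradient_bound (C : ℝ) (hC : 0 < C) :
    ∃ ρ' > 0, ∃ B > 0, ∀ S : ℝ → ℝ,
      ContinuousOn S (Set.Icc 0 ρ') →
      (∀ t ∈ Set.Icc (0 : ℝ) ρ', 0 ≤ S t) →
      S 0 = 0 →
      (∀ t ∈ Set.Icc (0 : ℝ) ρ', S t ≤ C * (1 + S t) ^ ((5 : ℝ) / 2) * t) →
      ∀ t ∈ Set.Icc (0 : ℝ) ρ', S t ≤ B := by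
  refine ⟨1 / (16 * C), by positivity, 1, one_pos, ?_⟩
  intro S hcont hnn h0 hineq t ht
  by_contra hgt
  push_neg at hgt
  obtain ⟨ht0, htρ⟩ := ht
  -- find s ∈ [0, t] with S s = 1 by IVT
  have hsub : Set.Icc (0 : ℝ) t ⊆ Set.Icc 0 (1 / (16 * C)) :=
    Set.Icc_subset_Icc le_rfl htρ
  have hIVT := intermediate_value_Icc ht0 (hcont.mono hsub)
  have h1mem : (1 : ℝ) ∈ Set.Icc (S 0) (S t) := by
    rw [h0]; exact ⟨zero_le_one, hgt.le⟩
  obtain ⟨s, hs, hSs⟩ := hIVT h1mem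
  have hsρ : s ∈ Set.Icc (0 : ℝ) (1 / (16 * C)) := hsub hs
  have key := hineq s hsρ
  rw [hSs] at key
  have h2 : (1 : ℝ) + 1 = 2 := by norm_num
  rw [h2] at key
  have hpow : (2 : ℝ) ^ ((5 : ℝ) / 2) ≤ (2 : ℝ) ^ ((3 : ℝ)) := by
    apply Real.rpow_le_rpow_of_exponent_le one_le_two
    norm_num
  have h8 : (2 : ℝ) ^ ((3 : ℝ)) = 8 := by
    rw [show (3 : ℝ) = ((3 : ℕ) : ℝ) by norm_num, Real.rpow_natCast]
    norm_num
  have hpow' : (2 : ℝ) ^ ((5 : ℝ) / 2) ≤ 8 := h8 ▸ hpow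
  have hs2 : s ≤ 1 / (16 * C) := hsρ.2
  have : (1 : ℝ) ≤ C * 8 * (1 / (16 * C)) := by
    calc (1 : ℝ) ≤ C * (2 : ℝ) ^ ((5 : ℝ) / 2) * s := key
      _ ≤ C * 8 * (1 / (16 * C)) := by
        apply mul_le_mul (by nlinarith) hs2 hsρ.1 (by positivity)
  have heq : C * 8 * (1 / (16 * C)) = 1 / 2 := by
    field_simp
    ring
  rw [heq] at this
  norm_num at this
end

section
/- Let ρ₀ > 0, C₀ > 0, C₁ > 0, and assume √C₁ ρ₀ + arctan(C₀/√C₁) < π/2, so that μ(ρ) = √C₁ tan(√C₁ ρ + arctan(C₀/√C₁)) is defined on [0, ρ₀]. Let Λ : [0, ρ₀] → ℝ be Lipschitz continuous, so that Λ is differentiable almost everywhere and Λ(ρ) = Λ(0) + ∫₀^ρ Λ'(τ) dτ, and suppose that −C₁ < −Λ'(ρ) + Λ(ρ)² < C₁ at almost every ρ ∈ [0, ρ₀]. If |Λ(0)| < C₀, then −μ(ρ) < Λ(ρ) < μ(ρ) for all ρ ∈ [0, ρ₀]. -/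
open MeasureTheory Set intervalIntegral

lemma riccati_lipschitz_deriv_bound {K : NNReal} {f : ℝ → ℝ} {a b x d : ℝ}
    (hL : LipschitzOnWith K f (Set.Icc a b)) (hx : x ∈ Set.Ioo a b)
    (hd : HasDerivAt f d x) : |d| ≤ K := by
  have h1 : Filter.Tendsto (slope f x) (nhdsWithin x {x}ᶜ) (nhds d) :=
    hasDerivAt_iff_tendsto_slope.mp hd
  have hev : ∀ᶠ y in nhdsWithin x {x}ᶜ, |slope f x y| ≤ (K : ℝ) := by
    have h2 : ∀ᶠ y in nhdsWithin x {x}ᶜ, y ∈ Set.Ioo a b :=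
      Filter.eventually_iff_exists_mem.mpr ⟨_, nhdsWithin_le_nhds (Ioo_mem_nhds hx.1 hx.2),
        fun y hy => hy⟩
    have h3 : ∀ᶠ y in nhdsWithin x {x}ᶜ, y ≠ x := by
      filter_upwards [self_mem_nhdsWithin] with y hy using hy
    filter_upwards [h2, h3] with y hy hyx
    have hdist : |f y - f x| ≤ (K : ℝ) * |y - x| := by
      have := hL.dist_le_mul y (Set.mem_Icc_of_Ioo hy) x (Set.mem_Icc_of_Ioo hx)
      simpa [Real.dist_eq] using this
    have hyx' : (0 : ℝ) < |y - x| := abs_pos.mpr (sub_ne_zero.mpr hyx)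
    rw [slope_def_field, div_eq_mul_inv, abs_mul, abs_inv, ← div_eq_mul_inv,
      div_le_iff₀ hyx']
    exact hdist
  exact le_of_tendsto h1.abs hev

lemma riccati_gronwall_aux {g : ℝ → ℝ} {b M : ℝ} (hb : 0 < b)
    (hgc : ContinuousOn g (Set.Icc 0 b))
    (hpos : ∀ ρ ∈ Set.Ioo 0 b, 0 < g ρ)
    (hkey : ∀ ρ ∈ Set.Icc 0 b, g ρ ≤ M * ∫ τ in ρ..b, g τ) : False := by
  have hgint : IntegrableOn g (Set.Icc 0 b) volume := hgc.integrableOn_Icc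
  have hII : ∀ x ∈ Set.Icc (0:ℝ) b, IntervalIntegrable g volume 0 x := fun x hx =>
    (hgint.mono_set (Set.uIcc_subset_Icc (Set.left_mem_Icc.mpr hb.le) hx)).intervalIntegrable
  set P : ℝ → ℝ := fun x => ∫ τ in (0:ℝ)..x, g τ with hP
  have hPG : ∀ x ∈ Set.Icc (0:ℝ) b, (∫ τ in x..b, g τ) = P b - P x := fun x hx =>
    (integral_interval_sub_left (hII b (Set.right_mem_Icc.mpr hb.le)) (hII x hx)).symm
  have hPc : ContinuousOn P (Set.Icc 0 b) := by
    have := continuousOn_primitive_interval (μ := volume) (a := (0:ℝ)) (b := b) (f := g)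
      (by rwa [Set.uIcc_of_le hb.le])
    rwa [Set.uIcc_of_le hb.le] at this
  set F : ℝ → ℝ := fun x => Real.exp (M * x) * (P b - P x) with hF
  have hFderiv : ∀ x ∈ Set.Ioo (0:ℝ) b,
      HasDerivAt F (Real.exp (M * x) * (M * (P b - P x) - g x)) x := by
    intro x hx
    have hPd : HasDerivAt P (g x) x := by
      refine integral_hasDerivAt_right (hII x (Set.mem_Icc_of_Ioo hx)) ?_ ?_
      · exact (hgc.mono Set.Ioo_subset_Icc_self).stronglyMeasurableAtFilter isOpen_Ioo x hx
      · exact hgc.continuousAt (Icc_mem_nhds hx.1 hx.2)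
    have he : HasDerivAt (fun x => Real.exp (M * x)) (M * Real.exp (M * x)) x := by
      simpa [mul_comm, Function.comp_def] using (Real.hasDerivAt_exp (M*x)).comp x
        ((hasDerivAt_id x).const_mul M)
    have := he.mul ((hasDerivAt_const x (P b)).sub hPd)
    refine this.congr_deriv ?_
    simp only [Pi.sub_apply]
    ring
  have hmono : MonotoneOn F (Set.Icc 0 b) := by
    apply monotoneOn_of_deriv_nonneg (convex_Icc 0 b)
    · exact ((Real.continuous_exp.comp (continuous_const.mul continuous_id)).continuousOn).mul
        (continuousOn_const.sub hPc)
    · intro x hx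
      rw [interior_Icc] at hx
      exact ((hFderiv x hx).differentiableAt).differentiableWithinAt
    · intro x hx
      rw [interior_Icc] at hx
      rw [(hFderiv x hx).deriv]
      have h1 : g x ≤ M * (P b - P x) := by
        have := hkey x (Set.mem_Icc_of_Ioo hx)
        rwa [hPG x (Set.mem_Icc_of_Ioo hx)] at this
      have := Real.exp_pos (M * x)
      nlinarith
  have hF0 : F 0 ≤ F b :=
    hmono (Set.left_mem_Icc.mpr hb.le) (Set.right_mem_Icc.mpr hb.le) hb.le
  have hFb : F b = 0 := by simp [hF]
  have hF0' : F 0 = P b := by simp [hF, hP]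
  have hPbpos : 0 < P b :=
    intervalIntegral.intervalIntegral_pos_of_pos_on (hII b (Set.right_mem_Icc.mpr hb.le)) hpos hb
  rw [hFb, hF0'] at hF0
  linarith

/-- Riccati comparison argument from Appendix C of the paper (Proposition C.1):
if `Λ` is Lipschitz on `[0, ρ₀]` (hence differentiable a.e. with
`Λ(ρ) = Λ(0) + ∫₀^ρ Λ'`), satisfies `-C₁ < -Λ' + Λ² < C₁` almost everywhere,
and `|Λ(0)| < C₀`, then `-μ < Λ < μ` on `[0, ρ₀]`, where
`μ(ρ) = √C₁ tan(√C₁ ρ + arctan(C₀/√C₁))` is the exact solution of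
`-μ' + μ² = -C₁` with `μ(0) = C₀` (well defined on `[0, ρ₀]` since
`√C₁ ρ₀ + arctan(C₀/√C₁) < π/2`). -/
theorem riccati_comparison
    (ρ₀ C₀ C₁ : ℝ) (hρ₀ : 0 < ρ₀) (hC₀ : 0 < C₀) (hC₁ : 0 < C₁)
    (hdom : Real.sqrt C₁ * ρ₀ + Real.arctan (C₀ / Real.sqrt C₁) < Real.pi / 2)
    (Λ Λ' : ℝ → ℝ)
    (hLip : ∃ K : NNReal, LipschitzOnWith K Λ (Set.Icc 0 ρ₀))
    (hderiv : ∀ᵐ ρ ∂(volume.restrict (Set.Icc 0 ρ₀)),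
        HasDerivAt Λ (Λ' ρ) ρ ∧
        -C₁ < -Λ' ρ + Λ ρ ^ 2 ∧ -Λ' ρ + Λ ρ ^ 2 < C₁)
    (hFTC : ∀ ρ ∈ Set.Icc (0 : ℝ) ρ₀, Λ ρ = Λ 0 + ∫ τ in (0 : ℝ)..ρ, Λ' τ)
    (h0 : |Λ 0| < C₀) :
    ∀ ρ ∈ Set.Icc (0 : ℝ) ρ₀,
      -(Real.sqrt C₁ * Real.tan (Real.sqrt C₁ * ρ + Real.arctan (C₀ / Real.sqrt C₁)))
          < Λ ρ ∧
      Λ ρ < Real.sqrt C₁ * Real.tan (Real.sqrt C₁ * ρ + Real.arctan (C₀ / Real.sqrt C₁)) := by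
  obtain ⟨K, hK⟩ := hLip
  set s := Real.sqrt C₁ with hsdef
  have hs : 0 < s := Real.sqrt_pos.mpr hC₁
  have hs2 : s ^ 2 = C₁ := Real.sq_sqrt hC₁.le
  set θ := Real.arctan (C₀ / s) with hθdef
  have hθpos : 0 < θ := by
    have : Real.arctan 0 < Real.arctan (C₀ / s) := Real.arctan_strictMono (div_pos hC₀ hs)
    simpa [hθdef] using this
  set μ : ℝ → ℝ := fun ρ => s * Real.tan (s * ρ + θ) with hμdef
  have harg : ∀ ρ ∈ Set.Icc 0 ρ₀, s * ρ + θ ∈ Set.Ioo 0 (Real.pi/2) := by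
    intro ρ hρ
    constructor
    · have := mul_nonneg hs.le hρ.1; linarith
    · have : s * ρ ≤ s * ρ₀ := mul_le_mul_of_nonneg_left hρ.2 hs.le
      linarith
  have hcos : ∀ ρ ∈ Set.Icc 0 ρ₀, 0 < Real.cos (s*ρ+θ) := by
    intro ρ hρ
    have h := harg ρ hρ
    exact Real.cos_pos_of_mem_Ioo ⟨by linarith [h.1, Real.pi_pos], h.2⟩
  have hμpos : ∀ ρ ∈ Set.Icc 0 ρ₀, 0 < μ ρ := fun ρ hρ =>
    mul_pos hs (Real.tan_pos_of_pos_of_lt_pi_div_two (harg ρ hρ).1 (harg ρ hρ).2)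
  have hμ0 : μ 0 = C₀ := by
    simp only [hμdef, mul_zero, zero_add, hθdef, Real.tan_arctan]
    field_simp
  have hμderiv : ∀ ρ ∈ Set.Icc 0 ρ₀, HasDerivAt μ (C₁ + μ ρ ^ 2) ρ := by
    intro ρ hρ
    have hc := (hcos ρ hρ).ne'
    have h1 : HasDerivAt (fun x : ℝ => s * x + θ) s ρ := by
      simpa using ((hasDerivAt_id ρ).const_mul s).add_const θ
    have h2 : HasDerivAt Real.tan (1 / Real.cos (s*ρ+θ) ^ 2) (s*ρ+θ) := Real.hasDerivAt_tan hc
    have h3 := (h2.comp ρ h1).const_mul s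
    refine h3.congr_deriv ?_
    have h4 : (1 + Real.tan (s*ρ+θ)^2)⁻¹ = Real.cos (s*ρ+θ)^2 := Real.inv_one_add_tan_sq hc
    have h5 : 1 / Real.cos (s*ρ+θ)^2 = 1 + Real.tan (s*ρ+θ)^2 := by
      rw [one_div, ← h4, inv_inv]
    simp only [hμdef]
    rw [h5, ← hs2]
    ring
  have hμcont : ContinuousOn μ (Set.Icc 0 ρ₀) := fun ρ hρ =>
    ((hμderiv ρ hρ).continuousAt).continuousWithinAt
  set μ' : ℝ → ℝ := fun τ => C₁ + μ τ ^ 2 with hμ'def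
  have hμ'cont : ContinuousOn μ' (Set.Icc 0 ρ₀) := continuousOn_const.add (hμcont.pow 2)
  have hsub : ∀ a b : ℝ, a ∈ Set.Icc 0 ρ₀ → b ∈ Set.Icc 0 ρ₀ → Set.uIcc a b ⊆ Set.Icc 0 ρ₀ :=
    fun a b ha hb => Set.uIcc_subset_Icc ha hb
  have hμint : ∀ a b : ℝ, a ∈ Set.Icc 0 ρ₀ → b ∈ Set.Icc 0 ρ₀ →
      IntervalIntegrable μ' volume a b := fun a b ha hb =>
    (hμ'cont.mono (hsub a b ha hb)).intervalIntegrable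
  have hμFTC : ∀ a b : ℝ, a ∈ Set.Icc 0 ρ₀ → b ∈ Set.Icc 0 ρ₀ →
      (∫ τ in a..b, μ' τ) = μ b - μ a := fun a b ha hb =>
    intervalIntegral.integral_eq_sub_of_hasDerivAt
      (fun t ht => hμderiv t (hsub a b ha hb ht)) (hμint a b ha hb)
  -- a.e. facts about Λ'
  have haeIoo : ∀ᵐ ρ ∂(volume.restrict (Set.Icc 0 ρ₀)), ρ ∈ Set.Ioo 0 ρ₀ := by
    have h1 : ∀ᵐ ρ ∂(volume.restrict (Set.Icc 0 ρ₀)), ρ ∈ Set.Icc 0 ρ₀ :=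
      ae_restrict_mem measurableSet_Icc
    have h2 : ∀ᵐ ρ ∂(volume.restrict (Set.Icc 0 ρ₀)), ρ ∉ ({0, ρ₀} : Set ℝ) := by
      refine Filter.Eventually.filter_mono (ae_mono Measure.restrict_le_self) ?_
      have hz : volume ({0, ρ₀} : Set ℝ) = 0 :=
        ((Set.finite_singleton ρ₀).insert 0).measure_zero volume
      exact measure_eq_zero_iff_ae_notMem.mp hz
    filter_upwards [h1, h2] with ρ hρ hρ'
    simp only [Set.mem_insert_iff, Set.mem_singleton_iff, not_or] at hρ'
    exact ⟨hρ.1.lt_of_ne (Ne.symm hρ'.1), hρ.2.lt_of_ne hρ'.2⟩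
  have hΛ'eq : Λ' =ᵐ[volume.restrict (Set.Icc 0 ρ₀)] deriv Λ := by
    filter_upwards [hderiv] with ρ h using (h.1.deriv).symm
  have hmeasΛ' : AEStronglyMeasurable Λ' (volume.restrict (Set.Icc 0 ρ₀)) :=
    ((measurable_deriv Λ).aestronglyMeasurable).congr hΛ'eq.symm
  have hΛ'bd : ∀ᵐ ρ ∂(volume.restrict (Set.Icc 0 ρ₀)), ‖Λ' ρ‖ ≤ (K:ℝ) := by
    filter_upwards [hderiv, haeIoo] with ρ h hρ
    simpa [Real.norm_eq_abs] using riccati_lipschitz_deriv_bound hK hρ h.1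
  have hΛ'int : IntegrableOn Λ' (Set.Icc 0 ρ₀) volume := by
    refine Integrable.mono' (g := fun _ => (K:ℝ)) ?_ hmeasΛ' hΛ'bd
    exact integrableOn_const measure_Icc_lt_top.ne
  have hΛint : ∀ a b : ℝ, a ∈ Set.Icc 0 ρ₀ → b ∈ Set.Icc 0 ρ₀ →
      IntervalIntegrable Λ' volume a b := fun a b ha hb =>
    (hΛ'int.mono_set (hsub a b ha hb)).intervalIntegrable
  have h0mem : (0:ℝ) ∈ Set.Icc (0:ℝ) ρ₀ := Set.left_mem_Icc.mpr hρ₀.le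
  have hΛFTC : ∀ a b : ℝ, a ∈ Set.Icc 0 ρ₀ → b ∈ Set.Icc 0 ρ₀ →
      (∫ τ in a..b, Λ' τ) = Λ b - Λ a := by
    intro a b ha hb
    rw [hFTC b hb, hFTC a ha,
      ← intervalIntegral.integral_interval_sub_left (hΛint 0 b h0mem hb) (hΛint 0 a h0mem ha)]
    ring
  have hΛcont : ContinuousOn Λ (Set.Icc 0 ρ₀) := hK.continuousOn
  -- Part A : lower bound
  have hA : ∀ ρ ∈ Set.Icc 0 ρ₀, -μ ρ < Λ ρ := by
    intro ρ hρ
    have hρmem : Set.Icc 0 ρ ⊆ Set.Icc 0 ρ₀ := Set.Icc_subset_Icc le_rfl hρ.2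
    have hnn : 0 ≤ ∫ τ in (0:ℝ)..ρ, (Λ' τ + μ' τ) := by
      apply intervalIntegral.integral_nonneg_of_ae_restrict hρ.1
      have hae := Filter.Eventually.filter_mono
        (ae_mono (Measure.restrict_mono hρmem le_rfl)) hderiv
      filter_upwards [hae] with τ h
      have h1 : Λ τ ^ 2 - C₁ < Λ' τ := by linarith [h.2.2]
      have h2 := sq_nonneg (Λ τ)
      have h3 := sq_nonneg (μ τ)
      simp only [hμ'def, Pi.zero_apply]
      nlinarith
    have hsplit : (∫ τ in (0:ℝ)..ρ, (Λ' τ + μ' τ)) = (Λ ρ - Λ 0) + (μ ρ - μ 0) := by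
      rw [intervalIntegral.integral_add (hΛint 0 ρ h0mem hρ) (hμint 0 ρ h0mem hρ),
        hΛFTC 0 ρ h0mem hρ, hμFTC 0 ρ h0mem hρ]
    rw [hsplit, hμ0] at hnn
    have := (abs_lt.mp h0).1
    linarith
  -- Part B : upper bound
  have hB : ∀ ρ ∈ Set.Icc 0 ρ₀, Λ ρ < μ ρ := by
    by_contra hcon
    push_neg at hcon
    obtain ⟨ρ₁, hρ₁, hρ₁'⟩ := hcon
    set S : Set ℝ := {ρ | ρ ∈ Set.Icc 0 ρ₀ ∧ μ ρ ≤ Λ ρ} with hSdef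
    have hSne : S.Nonempty := ⟨ρ₁, hρ₁, hρ₁'⟩
    have hScl : IsClosed S := by
      have hSeq : S = Set.Icc 0 ρ₀ ∩ (fun x => Λ x - μ x) ⁻¹' (Set.Ici 0) := by
        ext x
        simp [hSdef, sub_nonneg]
      rw [hSeq]
      exact ContinuousOn.preimage_isClosed_of_isClosed (hΛcont.sub hμcont)
        isClosed_Icc isClosed_Ici
    have hSbb : BddBelow S := ⟨0, fun x hx => hx.1.1⟩
    set r := sInf S with hrdef
    have hrS : r ∈ S := hScl.csInf_mem hSne hSbb
    have hrIcc : r ∈ Set.Icc 0 ρ₀ := hrS.1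
    have hr0 : 0 < r := by
      rcases hrIcc.1.lt_or_eq with h | h
      · exact h
      · exfalso
        have : μ 0 ≤ Λ 0 := by rw [h]; exact hrS.2
        rw [hμ0] at this
        have := (abs_lt.mp h0).2
        linarith
    have hlt : ∀ τ ∈ Set.Ico 0 r, Λ τ < μ τ := by
      intro τ hτ
      by_contra hle
      push_neg at hle
      have hτS : τ ∈ S := ⟨⟨hτ.1, hτ.2.le.trans hrIcc.2⟩, hle⟩
      exact absurd (csInf_le hSbb hτS) (not_le.mpr hτ.2)
    set g : ℝ → ℝ := fun τ => μ τ - Λ τ with hgdef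
    have hgcont : ContinuousOn g (Set.Icc 0 ρ₀) := hμcont.sub hΛcont
    have hgr : g r = 0 := by
      have hle : g r ≤ 0 := sub_nonpos.mpr hrS.2
      have hge : 0 ≤ g r := by
        have hne : (nhdsWithin r (Set.Ioo 0 r)).NeBot := right_nhdsWithin_Ioo_neBot hr0
        have htd : Filter.Tendsto g (nhdsWithin r (Set.Ioo 0 r)) (nhds (g r)) :=
          (hgcont r hrIcc).mono (fun x hx => ⟨hx.1.le, hx.2.le.trans hrIcc.2⟩)
        refine ge_of_tendsto htd ?_
        filter_upwards [self_mem_nhdsWithin] with τ hτ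
        exact (sub_pos.mpr (hlt τ ⟨hτ.1.le, hτ.2⟩)).le
      linarith
    have hrsub : Set.Icc 0 r ⊆ Set.Icc 0 ρ₀ := Set.Icc_subset_Icc le_rfl hrIcc.2
    have hgnn : ∀ τ ∈ Set.Icc 0 r, 0 ≤ g τ := by
      intro τ hτ
      rcases hτ.2.lt_or_eq with h | h
      · exact (sub_pos.mpr (hlt τ ⟨hτ.1, h⟩)).le
      · rw [h, hgr]
    set M : ℝ := |Λ 0| + K * ρ₀ + s * Real.tan (s * ρ₀ + θ) with hMdef
    have hΛbd : ∀ τ ∈ Set.Icc 0 ρ₀, |Λ τ| ≤ |Λ 0| + K * ρ₀ := by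
      intro τ hτ
      have hd := hK.dist_le_mul τ hτ 0 h0mem
      rw [Real.dist_eq, Real.dist_eq] at hd
      have h2 : |τ - 0| ≤ ρ₀ := by rw [sub_zero, abs_of_nonneg hτ.1]; exact hτ.2
      have h3 := abs_sub_abs_le_abs_sub (Λ τ) (Λ 0)
      nlinarith [mul_le_mul_of_nonneg_left h2 (NNReal.coe_nonneg K)]
    have hμbd : ∀ τ ∈ Set.Icc 0 ρ₀, μ τ ≤ s * Real.tan (s * ρ₀ + θ) := by
      intro τ hτ
      have hmem1 := harg τ hτ
      have hmemρ₀ := harg ρ₀ (Set.right_mem_Icc.mpr hρ₀.le)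
      have hle : s * τ + θ ≤ s * ρ₀ + θ := by nlinarith [hτ.2, hs]
      have := Real.strictMonoOn_tan.monotoneOn
        ⟨by linarith [hmem1.1, Real.pi_pos], hmem1.2⟩
        ⟨by linarith [hmemρ₀.1, Real.pi_pos], hmemρ₀.2⟩ hle
      exact mul_le_mul_of_nonneg_left this hs.le
    have hMbd : ∀ τ ∈ Set.Icc 0 ρ₀, |Λ τ + μ τ| ≤ M := by
      intro τ hτ
      have h1 := abs_le.mp (hΛbd τ hτ)
      have h2 := hμbd τ hτ
      have h3 := hμpos τ hτ
      rw [abs_le]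
      constructor <;> [linarith; linarith]
    have hkey : ∀ ρ ∈ Set.Icc 0 r, g ρ ≤ M * ∫ τ in ρ..r, g τ := by
      intro ρ hρ
      have hρIcc : ρ ∈ Set.Icc 0 ρ₀ := hrsub hρ
      have hsub2 : Set.Icc ρ r ⊆ Set.Icc 0 ρ₀ := Set.Icc_subset_Icc hρ.1 hrIcc.2
      have hid : g ρ = ∫ τ in ρ..r, (Λ' τ - μ' τ) := by
        rw [intervalIntegral.integral_sub (hΛint ρ r hρIcc hrIcc) (hμint ρ r hρIcc hrIcc),
          hΛFTC ρ r hρIcc hrIcc, hμFTC ρ r hρIcc hrIcc]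
        have hgr' : μ r - Λ r = 0 := hgr
        simp only [hgdef]
        linarith
      have hMgint : IntervalIntegrable (fun τ => M * g τ) volume ρ r := by
        refine (ContinuousOn.intervalIntegrable ?_)
        have h1 : Set.uIcc ρ r ⊆ Set.Icc 0 ρ₀ := by
          rw [Set.uIcc_of_le hρ.2]; exact hsub2
        exact continuousOn_const.mul (hgcont.mono h1)
      have hmono2 : (∫ τ in ρ..r, (Λ' τ - μ' τ)) ≤ ∫ τ in ρ..r, M * g τ := by
        apply intervalIntegral.integral_mono_ae_restrict hρ.2
          ((hΛint ρ r hρIcc hrIcc).sub (hμint ρ r hρIcc hrIcc)) hMgint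
        have hae := Filter.Eventually.filter_mono
          (ae_mono (Measure.restrict_mono hsub2 le_rfl)) hderiv
        filter_upwards [hae, ae_restrict_mem measurableSet_Icc] with τ h hτmem
        have hτr : τ ∈ Set.Icc 0 r := ⟨hρ.1.trans hτmem.1, hτmem.2⟩
        have hg0 : 0 ≤ g τ := hgnn τ hτr
        have habs := (abs_le.mp (hMbd τ (hrsub hτr))).1
        have hΛ'lt : Λ' τ < C₁ + Λ τ ^ 2 := by linarith [h.2.1]
        have h1 : Λ' τ - μ' τ ≤ (-(Λ τ + μ τ)) * g τ := by
          simp only [hμ'def, hgdef]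
          nlinarith
        have h2 : (-(Λ τ + μ τ)) * g τ ≤ M * g τ :=
          mul_le_mul_of_nonneg_right (by linarith) hg0
        linarith
      rw [hid, ← intervalIntegral.integral_const_mul]
      exact hmono2
    exact riccati_gronwall_aux hr0 (hgcont.mono hrsub)
      (fun τ hτ => sub_pos.mpr (hlt τ ⟨hτ.1.le, hτ.2⟩)) hkey
  intro ρ hρ
  exact ⟨hA ρ hρ, hB ρ hρ⟩
end
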